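/- arXiv:2205.13144 — 6 statements merged into one kernel-verified Lean document; each statement's English description precedes it below -/
import Mathlib

section
/- Let d ≥ 1 and let A be a d×d matrix with integer entries that is invertible over ℝ and whose characteristic polynomial is irreducible over ℚ. Then there exists a constant C > 0 such that for every integer k ≥ 1 the set A^{-k}ℤ^d = {z ∈ ℝ^d : A^k z ∈ ℤ^d} is C·|det A|^{-k/d}-dense in ℝ^d; that is, for every y ∈ ℝ^d there exists z ∈ ℝ^d with A^k z ∈ ℤ^d and ‖z − y‖ ≤ C·|det A|^{-k/d}. (Equivalently: the k-th preimage set of any point under the torus endomorphism induced by A is C·|det A|^{-k/d}-dense in the torus.) -/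
/-- A vector of integers viewed as a point of `ℝ^d`. -/
noncomputable def intVec {d : ℕ} (n : Fin d → ℤ) : EuclideanSpace ℝ (Fin d) :=
  WithLp.toLp 2 (fun i => (n i : ℝ))

open Matrix in
/-- Mapping an integer matrix-vector product into `ℝ`. -/
lemma castVec_int {m n : Type*} [Fintype n] (M : Matrix m n ℤ) (w : n → ℤ) :
    (M.map ((↑) : ℤ → ℝ)).mulVec (fun i => (w i : ℝ)) = fun i => ((M.mulVec w) i : ℝ) :=
  funext fun i => (RingHom.map_mulVec (Int.castRingHom ℝ) M w i).symm

open Matrix Polynomial in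
lemma cyclic_det_ne_zero {d : ℕ} (B : Matrix (Fin d) (Fin d) ℚ)
    (hirr : Irreducible B.charpoly) {v : Fin d → ℚ} (hv : v ≠ 0) :
    (Matrix.of fun i j : Fin d => ((B ^ (j : ℕ)).mulVec v) i).det ≠ 0 := by
  classical
  have hdim : B.charpoly.natDegree = d := by
    rw [Matrix.charpoly_natDegree_eq_dim, Fintype.card_fin]
  have hd : 0 < d := by
    rcases Nat.eq_zero_or_pos d with h | h
    · exfalso
      apply hirr.not_isUnit
      have h1 : B.charpoly = 1 :=
        B.charpoly_monic.natDegree_eq_zero.mp (by omega)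
      rw [h1]; exact isUnit_one
    · exact h
  intro hdet0
  obtain ⟨c, hc0, hc⟩ := (Matrix.exists_mulVec_eq_zero_iff).mpr hdet0
  set p : ℚ[X] := ∑ j : Fin d, Polynomial.C (c j) * X ^ (j : ℕ) with hp
  have hcoeff : ∀ j0 : Fin d, p.coeff (j0 : ℕ) = c j0 := by
    intro j0
    rw [hp, Polynomial.finset_sum_coeff]
    simp only [Polynomial.coeff_C_mul, Polynomial.coeff_X_pow]
    rw [Finset.sum_eq_single j0]
    · simp
    · intro j _ hj
      have hne : (j : ℕ) ≠ (j0 : ℕ) := fun h => hj (Fin.ext h)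
      rw [if_neg (fun h => hne h.symm), mul_zero]
    · simp
  have hpne : p ≠ 0 := by
    intro h0
    apply hc0
    funext j
    have h1 := hcoeff j
    rw [h0] at h1
    simpa using h1.symm
  have hpdeg : p.natDegree < d := by
    have h1 : p.natDegree ≤ d - 1 := by
      rw [hp]
      refine Polynomial.natDegree_sum_le_of_forall_le _ _ fun j _ => ?_
      refine (Polynomial.natDegree_C_mul_le _ _).trans ?_
      rw [Polynomial.natDegree_X_pow]
      omega
    omega
  have hnd : ¬ B.charpoly ∣ p := fun hdvd => by
    have := Polynomial.natDegree_le_of_dvd hdvd hpne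
    omega
  obtain ⟨a, b, hab⟩ := hirr.coprime_iff_not_dvd.mpr hnd
  have hpv : (Polynomial.aeval B p).mulVec v = 0 := by
    have h1 : (Polynomial.aeval B p) = ∑ j : Fin d, c j • B ^ (j : ℕ) := by
      rw [hp, map_sum]
      refine Finset.sum_congr rfl fun j _ => ?_
      rw [_root_.map_mul, Polynomial.aeval_C, map_pow, Polynomial.aeval_X,
        Algebra.algebraMap_eq_smul_one, smul_mul_assoc, one_mul]
    rw [h1]
    funext i
    have hci := congrFun hc i
    simp only [Matrix.mulVec, dotProduct, Matrix.of_apply, Pi.zero_apply] at hci ⊢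
    simp only [Matrix.sum_apply, Matrix.smul_apply, smul_eq_mul]
    calc ∑ l : Fin d, (∑ j : Fin d, c j * (B ^ (j : ℕ)) i l) * v l
        = ∑ l : Fin d, ∑ j : Fin d, c j * (B ^ (j : ℕ)) i l * v l := by
          refine Finset.sum_congr rfl fun l _ => ?_
          rw [Finset.sum_mul]
      _ = ∑ j : Fin d, ∑ l : Fin d, c j * (B ^ (j : ℕ)) i l * v l := Finset.sum_comm
      _ = ∑ j : Fin d, (∑ l : Fin d, (B ^ (j : ℕ)) i l * v l) * c j := by
          refine Finset.sum_congr rfl fun j _ => ?_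
          rw [Finset.sum_mul]
          refine Finset.sum_congr rfl fun l _ => ?_
          ring
      _ = 0 := hci
  have hfin : v = 0 := by
    have h2 : (Polynomial.aeval B (a * B.charpoly + b * p)) = 1 := by rw [hab]; simp
    rw [map_add, _root_.map_mul, _root_.map_mul, Matrix.aeval_self_charpoly, mul_zero,
      zero_add] at h2
    have h3 := congrArg (fun Mm : Matrix (Fin d) (Fin d) ℚ => Mm.mulVec v) h2
    rw [← Matrix.mulVec_mulVec, hpv, Matrix.mulVec_zero, Matrix.one_mulVec] at h3
    exact h3.symm
  exact hv hfin

open Matrix in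
lemma castVec_rat' {m n : Type*} [Fintype n] (M : Matrix m n ℚ) (w : n → ℚ) :
    (M.map ((↑) : ℚ → ℝ)).mulVec (fun i => (w i : ℝ)) = fun i => ((M.mulVec w) i : ℝ) :=
  funext fun i => (RingHom.map_mulVec (Rat.castHom ℝ) M w i).symm


open Matrix in
lemma det_powers_ne_zero {d : ℕ} (A : Matrix (Fin d) (Fin d) ℤ)
    (hdet : (A.map ((↑) : ℤ → ℝ)).det ≠ 0)
    (hirr : Irreducible (Matrix.charpoly (A.map ((↑) : ℤ → ℚ))))
    (k : ℕ) {v : Fin d → ℝ} (hv : v ≠ 0) {n : Fin d → ℤ}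
    (hAkv : ((A.map ((↑) : ℤ → ℝ)) ^ k).mulVec v = fun i => (n i : ℝ)) :
    (Matrix.of fun i j : Fin d => (((A.map ((↑) : ℤ → ℝ)) ^ (j : ℕ)).mulVec v) i).det ≠ 0 := by
  classical
  set AQ := A.map ((↑) : ℤ → ℚ) with hAQ
  set AR := A.map ((↑) : ℤ → ℝ) with hAR
  have hcomm : AR = AQ.map ((↑) : ℚ → ℝ) := by
    rw [hAQ, hAR, Matrix.map_map]
    ext i j
    simp
  have hpow : ∀ j : ℕ, AR ^ j = (AQ ^ j).map ((↑) : ℚ → ℝ) := by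
    intro j
    have h := map_pow ((Rat.castHom ℝ).mapMatrix) AQ j
    rw [RingHom.mapMatrix_apply, RingHom.mapMatrix_apply, Rat.coe_castHom] at h
    rw [hcomm, ← h]
  have hdetQ : AQ.det ≠ 0 := by
    have h1 : AR.det = ((A.det : ℝ)) := ((Int.castRingHom ℝ).map_det A).symm
    have h2 : AQ.det = ((A.det : ℚ)) := ((Int.castRingHom ℚ).map_det A).symm
    rw [h1] at hdet
    rw [h2]
    exact_mod_cast fun h => hdet (by exact_mod_cast h)
  have hUnit : IsUnit (AQ ^ k).det := by
    rw [Matrix.det_pow]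
    exact (pow_ne_zero k hdetQ).isUnit
  set vq : Fin d → ℚ := ((AQ ^ k)⁻¹).mulVec (fun i => (n i : ℚ)) with hvq_def
  have h1 : (AQ ^ k).mulVec vq = fun i => (n i : ℚ) := by
    rw [hvq_def, Matrix.mulVec_mulVec, Matrix.mul_nonsing_inv _ hUnit, Matrix.one_mulVec]
  have hARk : IsUnit (AR ^ k).det := by
    rw [Matrix.det_pow]
    exact (pow_ne_zero k hdet).isUnit
  have e1 : (AR ^ k).mulVec (fun i => ((vq i : ℝ))) = fun i => (n i : ℝ) := by
    rw [hpow k, castVec_rat' (AQ ^ k) vq, h1]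
    funext i
    push_cast
    rfl
  have h2 : v = fun i => ((vq i : ℝ)) := by
    have h3 := congrArg ((AR ^ k)⁻¹.mulVec) (hAkv.trans e1.symm)
    rwa [Matrix.mulVec_mulVec, Matrix.nonsing_inv_mul _ hARk, Matrix.one_mulVec,
      Matrix.mulVec_mulVec, Matrix.nonsing_inv_mul _ hARk, Matrix.one_mulVec] at h3
  have hvq : vq ≠ 0 := by
    intro h
    apply hv
    rw [h2, h]
    funext i
    simp
  have hW : (Matrix.of fun i j : Fin d => ((AR ^ (j : ℕ)).mulVec v) i)
      = (Matrix.of fun i j : Fin d => ((AQ ^ (j : ℕ)).mulVec vq) i).map ((↑) : ℚ → ℝ) := by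
    ext i j
    simp only [Matrix.of_apply, Matrix.map_apply]
    rw [h2, hpow (j : ℕ), castVec_rat' (AQ ^ (j : ℕ)) vq]
  rw [hW]
  have h4 : ((Matrix.of fun i j : Fin d => ((AQ ^ (j : ℕ)).mulVec vq) i).map ((↑) : ℚ → ℝ)).det
      = (((Matrix.of fun i j : Fin d => ((AQ ^ (j : ℕ)).mulVec vq) i).det : ℚ) : ℝ) :=
    ((Rat.castHom ℝ).map_det _).symm
  rw [h4]
  have := cyclic_det_ne_zero AQ hirr hvq
  exact_mod_cast this

open Matrix MeasureTheory Submodule Metric in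
lemma exists_short_preimage (d : ℕ) (M : Matrix (Fin d) (Fin d) ℝ)
    (hM : M.det ≠ 0)
    (r : ℝ)
    (hvol : ENNReal.ofReal |M.det|⁻¹ * 2 ^ d
      < volume (Metric.ball (0 : EuclideanSpace ℝ (Fin d)) r)) :
    ∃ v : EuclideanSpace ℝ (Fin d), v ≠ 0 ∧ ‖v‖ < r ∧
      ∃ n : Fin d → ℤ, M.mulVec v = fun i => ((n i : ℝ)) := by
  classical
  haveI hMinv : Invertible M := M.invertibleOfIsUnitDet (isUnit_iff_ne_zero.2 hM)
  set f : (Fin d → ℝ) ≃ₗ[ℝ] (Fin d → ℝ) := M.toLinearEquiv' hMinv with hf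
  set b : Module.Basis (Fin d) ℝ (Fin d → ℝ) := (Pi.basisFun ℝ (Fin d)).map f.symm with hb
  have hbj : ∀ j, b j = (⅟M).mulVec (Pi.single j 1) := by
    intro j
    rw [hb, Module.Basis.map_apply, Pi.basisFun_apply]
    have : f.symm (Pi.single j 1) = Matrix.toLin' (⅟M) (Pi.single j 1) := by
      rw [hf]
      rfl
    rw [this, Matrix.toLin'_apply]
  have h_fund := ZSpan.isAddFundamentalDomain' b volume
  haveI : Countable (span ℤ (Set.range b)).toAddSubgroup := by
    change Countable (span ℤ (Set.range b))
    infer_instance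
  set lE : (Fin d → ℝ) ≃ₗ[ℝ] EuclideanSpace ℝ (Fin d) :=
    (WithLp.linearEquiv 2 ℝ (Fin d → ℝ)).symm with hlE
  set s : Set (Fin d → ℝ) := ⇑lE ⁻¹' Metric.ball 0 r with hs
  have h_symm : ∀ x ∈ s, -x ∈ s := by
    intro x hx
    rw [hs, Set.mem_preimage, map_neg, mem_ball_zero_iff, norm_neg, ← mem_ball_zero_iff]
    exact hx
  have h_conv : Convex ℝ s := by
    have hcb := (convex_ball (0 : EuclideanSpace ℝ (Fin d)) r).linear_preimage
      (lE : (Fin d → ℝ) →ₗ[ℝ] EuclideanSpace ℝ (Fin d))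
    rwa [LinearEquiv.coe_coe] at hcb
  have hs_vol : volume s = volume (Metric.ball (0 : EuclideanSpace ℝ (Fin d)) r) := by
    have hmp := (EuclideanSpace.volume_preserving_symm_measurableEquiv_toLp (Fin d)).symm
    rw [← hmp.measure_preimage measurableSet_ball.nullMeasurableSet]
    rfl
  have h_fundvol : volume (ZSpan.fundamentalDomain b) = ENNReal.ofReal |M.det|⁻¹ := by
    rw [ZSpan.volume_fundamentalDomain]
    congr 1
    have hofb : (Matrix.of ⇑b) = (M⁻¹)ᵀ := by
      ext j i
      rw [Matrix.of_apply, Matrix.transpose_apply, hbj j, Matrix.invOf_eq_nonsing_inv]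
      rw [Matrix.mulVec_single]
      simp
    rw [hofb, Matrix.det_transpose, Matrix.det_nonsing_inv, Ring.inverse_eq_inv', abs_inv]
  obtain ⟨x, hx0, hxs⟩ := exists_ne_zero_mem_lattice_of_measure_mul_two_pow_lt_measure
    h_fund h_symm h_conv (by
      rw [h_fundvol, hs_vol, Module.finrank_pi, Fintype.card_fin]
      exact hvol)
  refine ⟨lE (x : Fin d → ℝ), ?_, ?_, ?_⟩
  · intro h
    apply hx0
    have : (x : Fin d → ℝ) = 0 := by
      have := congrArg lE.symm h
      rwa [lE.symm_apply_apply, map_zero] at this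
    exact Subtype.ext this
  · rw [← mem_ball_zero_iff]
    exact hxs
  · have hmem : (x : Fin d → ℝ) ∈ span ℤ (Set.range b) := x.2
    have key : ∀ w ∈ span ℤ (Set.range b), ∃ n : Fin d → ℤ,
        M.mulVec w = fun i => ((n i : ℝ)) := by
      intro w hw
      refine Submodule.span_induction ?_ ?_ ?_ ?_ hw
      · rintro w ⟨j, rfl⟩
        refine ⟨Pi.single j 1, ?_⟩
        rw [hbj j, Matrix.mulVec_mulVec, mul_invOf_self, Matrix.one_mulVec]
        funext i
        by_cases h : i = j <;> simp [h, Pi.single_apply]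
      · exact ⟨0, by funext i; simp [Matrix.mulVec_zero]⟩
      · rintro w₁ w₂ _ _ ⟨n₁, h₁⟩ ⟨n₂, h₂⟩
        refine ⟨n₁ + n₂, ?_⟩
        rw [Matrix.mulVec_add, h₁, h₂]
        funext i
        push_cast
        simp
      · rintro z w _ ⟨n₁, h₁⟩
        refine ⟨z • n₁, ?_⟩
        have hzw : (z • w : Fin d → ℝ) = (z : ℝ) • w := by
          funext i
          simp [zsmul_eq_mul]
        rw [hzw, Matrix.mulVec_smul, h₁]
        funext i
        push_cast
        simp
    obtain ⟨n, hn⟩ := key _ hmem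
    exact ⟨n, hn⟩

open Matrix MeasureTheory Metric in
/-- Let `d ≥ 1` and let `A` be a `d × d` integer matrix, invertible over `ℝ`,
whose characteristic polynomial is irreducible over `ℚ`. Then there is a constant `C > 0` such
that for every `k ≥ 1` the set `A⁻ᵏ ℤ^d = {z : A^k z ∈ ℤ^d}` is `C·|det A|^(-k/d)`-dense
in `ℝ^d`. -/
theorem stmt0 (d : ℕ) (hd : 1 ≤ d) (A : Matrix (Fin d) (Fin d) ℤ)
    (hdet : (A.map ((↑) : ℤ → ℝ)).det ≠ 0)
    (hirr : Irreducible (Matrix.charpoly (A.map ((↑) : ℤ → ℚ)))) :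
    ∃ C > (0 : ℝ), ∀ k : ℕ, 1 ≤ k → ∀ y : EuclideanSpace ℝ (Fin d),
      ∃ z : EuclideanSpace ℝ (Fin d),
        (∃ n : Fin d → ℤ, ((A.map ((↑) : ℤ → ℝ)) ^ k).mulVec z = intVec n) ∧
        ‖z - y‖ ≤ C * |(A.map ((↑) : ℤ → ℝ)).det| ^ (-(k : ℝ) / (d : ℝ)) := by
  classical
  have hdne : (d : ℝ) ≠ 0 := Nat.cast_ne_zero.mpr (by omega)
  haveI : Nonempty (Fin d) := ⟨⟨0, by omega⟩⟩
  haveI : Nontrivial (EuclideanSpace ℝ (Fin d)) :=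
    ⟨0, WithLp.toLp 2 (fun _ => 1), fun h => by
      simpa using congrArg (fun x : EuclideanSpace ℝ (Fin d) => x ⟨0, by omega⟩) h⟩
  set AR := A.map ((↑) : ℤ → ℝ) with hARdef
  set D : ℝ := |AR.det| with hD
  have hD0 : 0 < D := abs_pos.mpr hdet
  set Vd : ENNReal := volume (Metric.ball (0 : EuclideanSpace ℝ (Fin d)) 1) with hVd
  have hVd0 : Vd ≠ 0 := (measure_ball_pos volume _ one_pos).ne'
  have hVdtop : Vd ≠ ⊤ := measure_ball_lt_top.ne
  set V : ℝ := Vd.toReal with hV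
  have hV0 : 0 < V := ENNReal.toReal_pos hVd0 hVdtop
  set c₂ : ℝ := 3 * max 1 V⁻¹ with hc₂
  have hmax1 : (1 : ℝ) ≤ max 1 V⁻¹ := le_max_left _ _
  have hc₂3 : 3 ≤ c₂ := by nlinarith
  have hc₂0 : 0 < c₂ := by linarith
  set T : Fin d → (EuclideanSpace ℝ (Fin d)) →L[ℝ] (EuclideanSpace ℝ (Fin d)) :=
    fun j => LinearMap.toContinuousLinearMap (Matrix.toEuclideanLin (AR ^ (j : ℕ))) with hT
  set K : ℝ := ∑ j : Fin d, ‖T j‖ with hK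
  have hK0 : 0 ≤ K := Finset.sum_nonneg fun j _ => norm_nonneg _
  refine ⟨K * c₂ / 2 + 1, by positivity, ?_⟩
  intro k hk y
  have hMk : (AR ^ k).det ≠ 0 := by rw [Matrix.det_pow]; exact pow_ne_zero _ hdet
  set γ : ℝ := -(k : ℝ) / (d : ℝ) with hγ
  set r : ℝ := c₂ * D ^ γ with hr
  have hDpow0 : (0:ℝ) < D ^ γ := Real.rpow_pos_of_pos hD0 _
  have hr0 : 0 < r := mul_pos hc₂0 hDpow0
  have hdetk : |(AR ^ k).det| = D ^ k := by rw [Matrix.det_pow, abs_pow]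
  -- the volume inequality
  have hrd : r ^ d = c₂ ^ d * (D ^ k)⁻¹ := by
    rw [hr, mul_pow]
    congr 1
    rw [← Real.rpow_natCast (D ^ γ) d, ← Real.rpow_mul hD0.le]
    have hγd : γ * (d : ℕ) = -(k : ℝ) := by
      rw [hγ]
      push_cast
      field_simp
    rw [hγd, Real.rpow_neg hD0.le, Real.rpow_natCast]
  have hvol : ENNReal.ofReal |(AR ^ k).det|⁻¹ * 2 ^ d
      < volume (Metric.ball (0 : EuclideanSpace ℝ (Fin d)) r) := by
    rw [hdetk]
    have hball : volume (Metric.ball (0 : EuclideanSpace ℝ (Fin d)) r)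
        = ENNReal.ofReal (r ^ d) * Vd := by
      rw [hVd, Measure.addHaar_ball volume _ hr0.le, finrank_euclideanSpace_fin]
    rw [hball]
    have h2d : (2 : ENNReal) ^ d = ENNReal.ofReal ((2:ℝ) ^ d) := by
      rw [ENNReal.ofReal_pow (by norm_num)]
      norm_num
    rw [h2d, ← ENNReal.ofReal_mul (by positivity)]
    have hVdof : Vd = ENNReal.ofReal V := by rw [hV, ENNReal.ofReal_toReal hVdtop]
    rw [hVdof, ← ENNReal.ofReal_mul (by positivity)]
    have hkey : (2:ℝ) ^ d < c₂ ^ d * V := by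
      have h1 : V⁻¹ ≤ (max 1 V⁻¹) ^ d :=
        le_trans (le_max_right 1 V⁻¹) (le_self_pow₀ hmax1 (by omega))
      have h2 : c₂ ^ d = 3 ^ d * (max 1 V⁻¹) ^ d := by rw [hc₂, mul_pow]
      have h3 : (2:ℝ) ^ d < 3 ^ d :=
        pow_lt_pow_left₀ (by norm_num) (by norm_num) (by omega)
      have h4 : (0:ℝ) < 3 ^ d := by positivity
      calc (2:ℝ) ^ d < 3 ^ d := h3
        _ = 3 ^ d * (V⁻¹ * V) := by rw [inv_mul_cancel₀ hV0.ne']; ring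
        _ ≤ 3 ^ d * ((max 1 V⁻¹) ^ d * V) :=
            mul_le_mul_of_nonneg_left (mul_le_mul_of_nonneg_right h1 hV0.le) h4.le
        _ = c₂ ^ d * V := by rw [h2]; ring
    rw [ENNReal.ofReal_lt_ofReal_iff (by positivity)]
    calc (D ^ k)⁻¹ * 2 ^ d = 2 ^ d * (D ^ k)⁻¹ := by ring
      _ < (c₂ ^ d * V) * (D ^ k)⁻¹ :=
          mul_lt_mul_of_pos_right hkey (inv_pos.mpr (pow_pos hD0 k))
      _ = (c₂ ^ d * (D ^ k)⁻¹) * V := by ring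
      _ = r ^ d * V := by rw [hrd]
  obtain ⟨v, hv0, hvr, n₀, hvn⟩ := exists_short_preimage d (AR ^ k) hMk r hvol
  set U : Matrix (Fin d) (Fin d) ℝ := Matrix.of (fun i j : Fin d => ((AR ^ (j:ℕ)).mulVec v) i)
    with hU
  have hUdet : U.det ≠ 0 := det_powers_ne_zero A hdet hirr k (fun h => hv0 (by simpa using h)) hvn
  have hUunit : IsUnit U.det := isUnit_iff_ne_zero.2 hUdet
  set c : Fin d → ℝ := (U⁻¹).mulVec y with hc
  set mz : Fin d → ℤ := fun j => round (c j) with hm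
  set z : EuclideanSpace ℝ (Fin d) := WithLp.toLp 2 (U.mulVec (fun j => ((mz j : ℝ)))) with hz
  refine ⟨z, ?_, ?_⟩
  · -- integrality
    set N : Matrix (Fin d) (Fin d) ℤ := Matrix.of (fun i j : Fin d => ((A ^ (j:ℕ)).mulVec n₀) i)
      with hN
    refine ⟨N.mulVec mz, ?_⟩
    have hNU : (AR ^ k) * U = N.map ((↑) : ℤ → ℝ) := by
      ext i j
      have e1 : ((AR ^ k) * U) i j = ((AR ^ k).mulVec (fun l => U l j)) i := by
        simp [Matrix.mul_apply, Matrix.mulVec, dotProduct]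
      rw [e1]
      have e2 : (fun l => U l j) = (AR ^ (j:ℕ)).mulVec v := rfl
      rw [e2, Matrix.mulVec_mulVec, ← pow_add, add_comm k (j:ℕ), pow_add,
        ← Matrix.mulVec_mulVec, hvn]
      have e3 : AR ^ (j:ℕ) = (A ^ (j:ℕ)).map ((↑) : ℤ → ℝ) := by
        rw [hARdef]
        have h := map_pow ((Int.castRingHom ℝ).mapMatrix) A (j:ℕ)
        rw [RingHom.mapMatrix_apply, RingHom.mapMatrix_apply] at h
        exact h.symm
      rw [e3, castVec_int (A ^ (j:ℕ)) n₀]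
      simp [hN]
    rw [hz, WithLp.ofLp_toLp, Matrix.mulVec_mulVec, hNU, castVec_int N mz]
    rfl
  · -- distance bound
    set uvec : Fin d → EuclideanSpace ℝ (Fin d) := fun j => WithLp.toLp 2 ((AR ^ (j:ℕ)).mulVec v) with huvec
    have hTv : ∀ j : Fin d, uvec j = T j v := by
      intro j
      have h1 : T j v = (WithLp.equiv 2 (Fin d → ℝ)).symm
          ((AR ^ (j:ℕ)) *ᵥ (WithLp.equiv 2 (Fin d → ℝ)) v) := by
        simp only [hT, LinearMap.coe_toContinuousLinearMap']
        exact Matrix.toEuclideanLin_apply _ _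
      rw [h1, huvec]
      ext i
      rfl
    have hUc : U.mulVec c = y := by
      rw [hc, Matrix.mulVec_mulVec, Matrix.mul_nonsing_inv _ hUunit, Matrix.one_mulVec]
    have hsumapply : ∀ (w : Fin d → ℝ) (i : Fin d),
        (∑ j : Fin d, w j • uvec j) i = ∑ j : Fin d, w j * uvec j i := by
      intro w i
      have h1 := map_sum (EuclideanSpace.proj (𝕜 := ℝ) i)
        (fun j => w j • uvec j) Finset.univ
      simpa only [PiLp.proj_apply, _root_.map_smul, smul_eq_mul] using h1
    have hzy : z - y = ∑ j : Fin d, ((mz j : ℝ) - c j) • uvec j := by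
      ext i
      have hLHS : (z - y) i = z i - y i := rfl
      rw [hLHS, hsumapply]
      have hyc : y i = ∑ l : Fin d, U i l * c l := by rw [← hUc]; rfl
      have hzc : z i = ∑ l : Fin d, U i l * (mz l : ℝ) := rfl
      rw [hzc, hyc, ← Finset.sum_sub_distrib]
      refine Finset.sum_congr rfl fun j _ => ?_
      have hu : uvec j i = U i j := rfl
      rw [hu]
      ring
    have hnorm : ‖z - y‖ ≤ ∑ j : Fin d, ‖((mz j : ℝ) - c j) • uvec j‖ := by
      rw [hzy]
      exact norm_sum_le _ _
    have hterm : ∀ j : Fin d, ‖((mz j : ℝ) - c j) • uvec j‖ ≤ (1/2) * (‖T j‖ * r) := by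
      intro j
      rw [norm_smul, Real.norm_eq_abs, hTv j]
      have h1 : |(mz j : ℝ) - c j| ≤ 1/2 := by
        rw [hm, abs_sub_comm]
        exact abs_sub_round (c j)
      have h2 : ‖T j v‖ ≤ ‖T j‖ * r :=
        le_trans ((T j).le_opNorm v)
          (mul_le_mul_of_nonneg_left hvr.le (norm_nonneg _))
      exact mul_le_mul h1 h2 (norm_nonneg _) (by norm_num)
    have hsum : ∑ j : Fin d, ‖((mz j : ℝ) - c j) • uvec j‖ ≤ (K * r) / 2 := by
      calc ∑ j : Fin d, ‖((mz j : ℝ) - c j) • uvec j‖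
          ≤ ∑ j : Fin d, (1/2) * (‖T j‖ * r) := Finset.sum_le_sum fun j _ => hterm j
        _ = (K * r) / 2 := by
            rw [hK, Finset.sum_mul, Finset.sum_div]
            refine Finset.sum_congr rfl fun j _ => ?_
            ring
    have hfin : ‖z - y‖ ≤ (K * c₂ / 2) * D ^ γ := by
      have h5 := le_trans hnorm hsum
      rw [hr] at h5
      have h6 : K * (c₂ * D ^ γ) / 2 = (K * c₂ / 2) * D ^ γ := by ring
      linarith
    refine le_trans hfin ?_
    have h7 : (K * c₂ / 2 + 1) * D ^ γ = (K * c₂ / 2) * D ^ γ + D ^ γ := by ring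
    linarith
end

section
/- Let A ∈ M_d(ℤ) ∩ GL_d(ℝ) be a hyperbolic integer matrix. Let F : ℝ^d → ℝ^d be a lift of a torus map with linearization A, and let H : ℝ^d → ℝ^d satisfy A ∘ H = H ∘ F and sup_{x∈ℝ^d} ‖H(x) − x‖ < ∞. Then for every x ∈ ℝ^d and every n ∈ ℤ^d, A^k(H(x+n) − H(x) − n) → 0 as k → +∞; that is, H(x+n) − n lies in the affine stable leaf H(x) + E^s(A). -/
open Filter Polynomial

/-- Matrix-vector multiplication, viewed as a map of `ℝ^d = EuclideanSpace ℝ (Fin d)`. -/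
noncomputable def mulVecE {d : ℕ} (A : Matrix (Fin d) (Fin d) ℝ)
    (x : EuclideanSpace ℝ (Fin d)) : EuclideanSpace ℝ (Fin d) :=
  WithLp.toLp 2 (A.mulVec x)

namespace Stmt4Aux

variable {E : Type*} [NormedAddCommGroup E] [NormedSpace ℂ E] [FiniteDimensional ℂ E]

/-- In finite dimensions, a spectral value is an eigenvalue. -/
lemma exists_eigenvector_of_mem_spectrum (T : E →L[ℂ] E) {μ : ℂ}
    (h : μ ∈ spectrum ℂ T) : ∃ u : E, u ≠ 0 ∧ T u = μ • u := by
  by_contra hc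
  push_neg at hc
  rw [spectrum.mem_iff] at h
  apply h
  set f : E →L[ℂ] E := algebraMap ℂ (E →L[ℂ] E) μ - T with hf
  have hfapp : ∀ x, f x = μ • x - T x := by
    intro x
    simp [hf, Algebra.algebraMap_eq_smul_one]
  have hker : ∀ x, f x = 0 → x = 0 := by
    intro x hx
    by_contra hx0
    exact hc x hx0 (by rw [hfapp] at hx; linear_combination (norm := module) -hx)
  have hinj : Function.Injective (f : E →ₗ[ℂ] E) := by
    intro x y hxy
    have : f (x - y) = 0 := by
      simp only [map_sub]
      rw [sub_eq_zero]
      exact hxy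
    have := hker _ this
    rwa [sub_eq_zero] at this
  have hsurj : Function.Surjective (f : E →ₗ[ℂ] E) :=
    LinearMap.injective_iff_surjective.mp hinj
  let e : E ≃ₗ[ℂ] E := LinearEquiv.ofBijective (f : E →ₗ[ℂ] E) ⟨hinj, hsurj⟩
  let ec : E ≃L[ℂ] E := e.toContinuousLinearEquiv
  refine ⟨⟨f, (ec.symm : E →L[ℂ] E), ?_, ?_⟩, rfl⟩
  · ext x
    show f ((ec.symm : E →L[ℂ] E) x) = x
    exact ec.apply_symm_apply x
  · ext x
    show (ec.symm : E →L[ℂ] E) (f x) = x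
    exact ec.symm_apply_apply x

/-- If all spectral values of an operator on a f.d. complex space have norm `< 1`, then its
powers tend to `0` in operator norm. -/
lemma opnorm_pow_tendsto (T : E →L[ℂ] E)
    (h : ∀ μ ∈ spectrum ℂ T, ‖μ‖ < 1) :
    Tendsto (fun k : ℕ => ‖(T ^ k : E →L[ℂ] E)‖) atTop (nhds 0) := by
  rcases subsingleton_or_nontrivial E with hE | hE
  · have hz : ∀ k : ℕ, (T ^ k : E →L[ℂ] E) = 0 := fun k => by
      ext x; exact Subsingleton.elim _ _
    simpa [hz] using (tendsto_const_nhds : Tendsto (fun _ : ℕ => (0:ℝ)) atTop (nhds 0))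
  haveI : CompleteSpace E := FiniteDimensional.complete ℂ E
  haveI : Nontrivial (E →L[ℂ] E) := by
    obtain ⟨x, hx⟩ := exists_ne (0 : E)
    refine ⟨1, 0, fun hco => hx ?_⟩
    have := congrArg (fun (S : E →L[ℂ] E) => S x) hco
    simpa using this
  have hsr : spectralRadius ℂ T < 1 := by
    have h1 := spectrum.spectralRadius_lt_of_forall_lt T (r := 1) ?_
    · simpa using h1
    · intro z hz
      have := h z hz
      exact_mod_cast this
  obtain ⟨c, hc1, hc2⟩ := exists_between hsr
  have hg := spectrum.pow_nnnorm_pow_one_div_tendsto_nhds_spectralRadius T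
  have hev : ∀ᶠ k : ℕ in atTop, (‖(T ^ k : E →L[ℂ] E)‖₊ : ENNReal) ^ (1 / (k:ℝ)) < c :=
    hg.eventually_lt_const hc1
  have hcne : c ≠ ⊤ := (hc2.trans_le le_top).ne
  have hbound : ∀ᶠ k : ℕ in atTop, ‖(T ^ k : E →L[ℂ] E)‖ ≤ c.toReal ^ k := by
    filter_upwards [hev, eventually_ge_atTop 1] with k hk hk1
    have hk0 : (k : ℝ) ≠ 0 := by positivity
    have h2 : ((‖(T ^ k : E →L[ℂ] E)‖₊ : ENNReal) ^ (1 / (k:ℝ))) ^ (k:ℝ) ≤ c ^ (k:ℝ) :=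
      ENNReal.rpow_le_rpow hk.le (by positivity)
    rw [← ENNReal.rpow_mul, one_div, inv_mul_cancel₀ hk0, ENNReal.rpow_one] at h2
    have h3 : (‖(T ^ k : E →L[ℂ] E)‖₊ : ENNReal) ≤ c ^ k := by
      rwa [ENNReal.rpow_natCast] at h2
    have h4 := ENNReal.toReal_mono (by simp [ENNReal.pow_ne_top hcne]) h3
    simpa [ENNReal.toReal_pow] using h4
  have hc2' : c.toReal < 1 := by
    rw [← ENNReal.toReal_one]
    exact ENNReal.toReal_strict_mono (by simp) hc2
  exact squeeze_zero' (Eventually.of_forall fun k => norm_nonneg _) hbound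
    (tendsto_pow_atTop_nhds_zero_of_lt_one ENNReal.toReal_nonneg hc2')

/-- Stable part: if `w` is killed by `q(f)` where all roots of `q` lie inside the unit disc,
then `f^k w → 0`. -/
lemma tendsto_pow_apply_of_stable (f : E →ₗ[ℂ] E) (q : ℂ[X])
    (hq : ∀ μ : ℂ, q.eval μ = 0 → ‖μ‖ < 1) (w : E)
    (hw : (Polynomial.aeval f q) w = 0) :
    Tendsto (fun k : ℕ => (f ^ k) w) atTop (nhds 0) := by
  set K : Submodule ℂ E := LinearMap.ker (Polynomial.aeval f q) with hK
  have hcommf : (Polynomial.aeval f q) * f = f * (Polynomial.aeval f q) := by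
    have h1 : Polynomial.aeval f (q * X) = Polynomial.aeval f (X * q) := by rw [mul_comm]
    simpa [map_mul, Polynomial.aeval_X] using h1
  have hinv : ∀ x ∈ K, f x ∈ K := by
    intro x hx
    rw [hK, LinearMap.mem_ker] at hx ⊢
    have : ((Polynomial.aeval f q) * f) x = 0 := by
      rw [hcommf]
      simp only [Module.End.mul_apply, hx, map_zero]
    simpa [Module.End.mul_apply] using this
  set g : Module.End ℂ K := f.restrict hinv with hg
  set T : K →L[ℂ] K := LinearMap.toContinuousLinearMap g with hT
  have hTapp : ∀ x : K, T x = g x := fun x => rfl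
  have hTspec : ∀ μ ∈ spectrum ℂ T, ‖μ‖ < 1 := by
    intro μ hμ
    obtain ⟨u, hu0, huT⟩ := exists_eigenvector_of_mem_spectrum T hμ
    have huv : f (u : E) = μ • (u : E) := by
      have h1 : g u = μ • u := by rw [← hTapp]; exact huT
      have := congrArg (Subtype.val) h1
      simpa [hg, LinearMap.restrict_apply] using this
    have hu0' : (u : E) ≠ 0 := fun h => hu0 (Subtype.ext h)
    have hev : Module.End.HasEigenvector f μ (u : E) :=
      ⟨Module.End.mem_eigenspace_iff.mpr huv, hu0'⟩
    have h0 : (Polynomial.aeval f q) (u : E) = q.eval μ • (u : E) :=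
      Module.End.aeval_apply_of_hasEigenvector hev
    have hmem : (Polynomial.aeval f q) (u : E) = 0 := u.2
    rw [hmem] at h0
    have : q.eval μ = 0 := by
      rcases smul_eq_zero.mp h0.symm with h | h
      · exact h
      · exact absurd h hu0'
    exact hq μ this
  have hnorm := opnorm_pow_tendsto T hTspec
  have hwK : w ∈ K := LinearMap.mem_ker.mpr hw
  have hgk : ∀ k : ℕ, ((g ^ k) ⟨w, hwK⟩ : E) = (f ^ k) w := by
    intro k
    rw [hg, Module.End.pow_restrict]
    simp [LinearMap.restrict_apply]
  have hTk : ∀ (k : ℕ) (x : K), (T ^ k) x = (g ^ k) x := by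
    intro k
    induction k with
    | zero => intro x; simp
    | succ k ih =>
      intro x
      rw [pow_succ, pow_succ]
      simp only [ContinuousLinearMap.mul_apply, Module.End.mul_apply]
      rw [hTapp x]
      exact ih (g x)
  rw [tendsto_zero_iff_norm_tendsto_zero]
  refine squeeze_zero (fun k => norm_nonneg _) (g := fun k => ‖(T ^ k : K →L[ℂ] K)‖ * ‖(⟨w, hwK⟩ : K)‖) ?_ ?_
  · intro k
    have h1 : ‖(f ^ k) w‖ = ‖(g ^ k) (⟨w, hwK⟩ : K)‖ := by
      rw [← hgk k]; rfl
    rw [h1, ← hTk k]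
    exact (T ^ k).le_opNorm _
  · simpa using hnorm.mul_const _

/-- Unstable part: if `w` is killed by `q(f)` where all roots of `q` lie outside the closed
unit disc, `f` is injective, and the orbit `f^k w` is bounded, then `w = 0`. -/
lemma eq_zero_of_unstable (f : E →ₗ[ℂ] E) (hfinj : Function.Injective f) (q : ℂ[X])
    (hq : ∀ μ : ℂ, q.eval μ = 0 → 1 < ‖μ‖) (w : E)
    (hw : (Polynomial.aeval f q) w = 0) (M : ℝ) (hM : ∀ k : ℕ, ‖(f ^ k) w‖ ≤ M) :
    w = 0 := by
  set K : Submodule ℂ E := LinearMap.ker (Polynomial.aeval f q) with hK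
  have hcommf : (Polynomial.aeval f q) * f = f * (Polynomial.aeval f q) := by
    have h1 : Polynomial.aeval f (q * X) = Polynomial.aeval f (X * q) := by rw [mul_comm]
    simpa [map_mul, Polynomial.aeval_X] using h1
  have hinv : ∀ x ∈ K, f x ∈ K := by
    intro x hx
    rw [hK, LinearMap.mem_ker] at hx ⊢
    have : ((Polynomial.aeval f q) * f) x = 0 := by
      rw [hcommf]
      simp only [Module.End.mul_apply, hx, map_zero]
    simpa [Module.End.mul_apply] using this
  set g : Module.End ℂ K := f.restrict hinv with hg
  have hginj : Function.Injective g := by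
    intro x y hxy
    have : f (x : E) = f (y : E) := by
      have := congrArg (Subtype.val) hxy
      simpa [hg, LinearMap.restrict_apply] using this
    exact Subtype.ext (hfinj this)
  have hgsurj : Function.Surjective g := LinearMap.injective_iff_surjective.mp hginj
  let e : K ≃ₗ[ℂ] K := LinearEquiv.ofBijective g ⟨hginj, hgsurj⟩
  set S : K →L[ℂ] K := LinearMap.toContinuousLinearMap (e.symm : K →ₗ[ℂ] K) with hS
  have hSg : ∀ x : K, S (g x) = x := by
    intro x
    have : S (g x) = e.symm (e x) := rfl
    rw [this, e.symm_apply_apply]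
  have hSspec : ∀ μ ∈ spectrum ℂ S, ‖μ‖ < 1 := by
    intro μ hμ
    obtain ⟨u, hu0, huS⟩ := exists_eigenvector_of_mem_spectrum S hμ
    have huS' : e.symm u = μ • u := huS
    have hμ0 : μ ≠ 0 := by
      intro h
      rw [h, zero_smul] at huS'
      have : u = e 0 := by rw [← huS']; exact (e.apply_symm_apply u).symm
      rw [map_zero] at this
      exact hu0 this
    set z : K := e.symm u with hz
    have hgz : g z = u := by
      have : e z = u := e.apply_symm_apply u
      exact this
    have hz0 : z ≠ 0 := by
      intro h
      rw [h, map_zero] at hgz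
      exact hu0 hgz.symm
    have hzu : z = μ • u := huS'
    have hgz2 : g z = μ⁻¹ • z := by
      rw [hgz, hzu, smul_smul, inv_mul_cancel₀ hμ0, one_smul]
    have hfz : f (z : E) = μ⁻¹ • (z : E) := by
      have := congrArg (Subtype.val) hgz2
      simpa [hg, LinearMap.restrict_apply] using this
    have hz0' : (z : E) ≠ 0 := fun h => hz0 (Subtype.ext h)
    have hev : Module.End.HasEigenvector f μ⁻¹ (z : E) :=
      ⟨Module.End.mem_eigenspace_iff.mpr hfz, hz0'⟩
    have h0 : (Polynomial.aeval f q) (z : E) = q.eval μ⁻¹ • (z : E) :=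
      Module.End.aeval_apply_of_hasEigenvector hev
    have hmem : (Polynomial.aeval f q) (z : E) = 0 := z.2
    rw [hmem] at h0
    have hqz : q.eval μ⁻¹ = 0 := by
      rcases smul_eq_zero.mp h0.symm with h | h
      · exact h
      · exact absurd h hz0'
    have h1 : 1 < ‖μ⁻¹‖ := hq _ hqz
    rw [norm_inv, one_lt_inv_iff₀] at h1
    exact h1.2
  have hnorm := opnorm_pow_tendsto S hSspec
  have hwK : w ∈ K := LinearMap.mem_ker.mpr hw
  have hgk : ∀ k : ℕ, ((g ^ k) ⟨w, hwK⟩ : E) = (f ^ k) w := by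
    intro k
    rw [hg, Module.End.pow_restrict]
    simp [LinearMap.restrict_apply]
  have hSk : ∀ (k : ℕ) (x : K), (S ^ k) ((g ^ k) x) = x := by
    intro k
    induction k with
    | zero => intro x; simp
    | succ k ih =>
      intro x
      have h1 : (g ^ (k+1)) x = (g ^ k) (g x) := by
        rw [pow_succ]; rfl
      have h2 : ∀ y : K, (S ^ (k+1)) y = S ((S ^ k) y) := by
        intro y; rw [pow_succ']; rfl
      rw [h1, h2, ih (g x), hSg]
  have hb2 : ∀ k : ℕ, ‖w‖ ≤ ‖(S ^ k : K →L[ℂ] K)‖ * M := by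
    intro k
    have h1 : (⟨w, hwK⟩ : K) = (S ^ k) ((g ^ k) ⟨w, hwK⟩) := (hSk k _).symm
    have h2 : ‖w‖ = ‖(⟨w, hwK⟩ : K)‖ := rfl
    rw [h2, h1]
    refine le_trans ((S ^ k).le_opNorm _) ?_
    have h3 : ‖(g ^ k) (⟨w, hwK⟩ : K)‖ = ‖(f ^ k) w‖ := by rw [← hgk k]; rfl
    exact mul_le_mul_of_nonneg_left (by rw [h3]; exact hM k) (norm_nonneg _)
  have h0 : ‖w‖ ≤ 0 := ge_of_tendsto (by simpa using hnorm.mul_const M) (Eventually.of_forall hb2)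
  exact norm_le_zero_iff.mp h0


lemma isCoprime_single (a : ℂ) (t : Multiset ℂ) (h : ∀ b ∈ t, a ≠ b) :
    IsCoprime (X - C a) ((t.map fun b => X - C b).prod) := by
  induction t using Multiset.induction_on with
  | empty => simpa using isCoprime_one_right
  | cons b t ih =>
    rw [Multiset.map_cons, Multiset.prod_cons]
    refine IsCoprime.mul_right ?_ (ih fun c hc => h c (Multiset.mem_cons_of_mem hc))
    exact Polynomial.pairwise_coprime_X_sub_C (Function.injective_id)
      (h b (Multiset.mem_cons_self b t))

lemma isCoprime_prods (s t : Multiset ℂ) (h : ∀ a ∈ s, ∀ b ∈ t, a ≠ b) :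
    IsCoprime ((s.map fun a => X - C a).prod) ((t.map fun b => X - C b).prod) := by
  induction s using Multiset.induction_on with
  | empty => simpa using isCoprime_one_left
  | cons a s ih =>
    rw [Multiset.map_cons, Multiset.prod_cons]
    exact IsCoprime.mul_left (isCoprime_single a t (h a (Multiset.mem_cons_self a s)))
      (ih fun a' ha' b hb => h a' (Multiset.mem_cons_of_mem ha') b hb)

/-- Core linear-algebra statement: for a hyperbolic invertible complex matrix, any vector with
bounded forward orbit has orbit tending to `0`. -/
lemma core {d : ℕ} (Bm : Matrix (Fin d) (Fin d) ℂ) (hdet : Bm.det ≠ 0)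
    (hroots : ∀ μ : ℂ, (Matrix.charpoly Bm).IsRoot μ → ‖μ‖ ≠ 1)
    (w : Fin d → ℂ) (M : ℝ) (hb : ∀ k : ℕ, ‖(Bm ^ k).mulVec w‖ ≤ M) :
    Tendsto (fun k : ℕ => (Bm ^ k).mulVec w) atTop (nhds 0) := by
  set f : (Fin d → ℂ) →ₗ[ℂ] (Fin d → ℂ) := Matrix.toLinAlgEquiv' Bm with hf
  have hfk : ∀ (k : ℕ) (v : Fin d → ℂ), (Bm ^ k).mulVec v = (f ^ k) v := by
    intro k v
    have h1 : f ^ k = Matrix.toLinAlgEquiv' (Bm ^ k) := (map_pow _ _ _).symm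
    rw [h1]
    exact (Matrix.toLinAlgEquiv'_apply _ v).symm
  set p := Matrix.charpoly Bm with hpdef
  have hCH : Polynomial.aeval f p = 0 := by
    have h1 := Polynomial.aeval_algHom_apply
      (Matrix.toLinAlgEquiv' : Matrix (Fin d) (Fin d) ℂ ≃ₐ[ℂ] _).toAlgHom Bm p
    rw [Matrix.aeval_self_charpoly, map_zero] at h1
    exact h1
  have hmonic : p.Monic := Bm.charpoly_monic
  have hpne : p ≠ 0 := hmonic.ne_zero
  have hsplit : p = (p.roots.map fun a => X - C a).prod :=
    (IsAlgClosed.splits p).eq_prod_roots_of_monic hmonic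
  set s := p.roots.filter (fun a => ‖a‖ < 1) with hsdef
  set t := p.roots.filter (fun a => ¬ ‖a‖ < 1) with htdef
  set ps := (s.map fun a => X - C a).prod with hpsdef
  set pt := (t.map fun a => X - C a).prod with hptdef
  have hpsne : ps ≠ 0 :=
    (Polynomial.monic_multiset_prod_of_monic s _ fun a _ => Polynomial.monic_X_sub_C a).ne_zero
  have hptne : pt ≠ 0 :=
    (Polynomial.monic_multiset_prod_of_monic t _ fun a _ => Polynomial.monic_X_sub_C a).ne_zero
  have hst : ps * pt = p := by
    rw [hpsdef, hptdef, ← Multiset.prod_add, ← Multiset.map_add, Multiset.filter_add_not]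
    exact hsplit.symm
  have hs_mem : ∀ μ : ℂ, ps.eval μ = 0 → ‖μ‖ < 1 := by
    intro μ hμ
    have h1 : μ ∈ s := by
      rw [← Polynomial.roots_multiset_prod_X_sub_C (s := s)]
      exact Polynomial.mem_roots'.mpr ⟨hpsne, hμ⟩
    exact (Multiset.mem_filter.mp h1).2
  have ht_mem : ∀ μ : ℂ, pt.eval μ = 0 → 1 < ‖μ‖ := by
    intro μ hμ
    have h1 : μ ∈ t := by
      rw [← Polynomial.roots_multiset_prod_X_sub_C (s := t)]
      exact Polynomial.mem_roots'.mpr ⟨hptne, hμ⟩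
    obtain ⟨h2, h3⟩ := Multiset.mem_filter.mp h1
    have h4 : p.IsRoot μ := (Polynomial.mem_roots'.mp h2).2
    have h5 : ‖μ‖ ≠ 1 := hroots μ h4
    exact lt_of_le_of_ne (not_lt.mp h3) (Ne.symm h5)
  have hcop : IsCoprime ps pt := by
    refine isCoprime_prods s t ?_
    intro a ha b hb
    have h1 : ‖a‖ < 1 := (Multiset.mem_filter.mp ha).2
    have h2 : ¬ ‖b‖ < 1 := (Multiset.mem_filter.mp hb).2
    intro h
    exact h2 (h ▸ h1)
  obtain ⟨pa, pb, hab⟩ := hcop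
  set ws := Polynomial.aeval f (pb * pt) w with hwsdef
  set wt := Polynomial.aeval f (pa * ps) w with hwtdef
  have hdecomp : w = wt + ws := by
    have h1 : Polynomial.aeval f (pa * ps) + Polynomial.aeval f (pb * pt) = 1 := by
      rw [← map_add, hab, map_one]
    have h2 := congrArg (fun (Lm : Module.End ℂ (Fin d → ℂ)) => Lm w) h1
    simp only [LinearMap.add_apply, Module.End.one_apply] at h2
    exact h2.symm
  have hkill_s : Polynomial.aeval f ps ws = 0 := by
    have h1 : Polynomial.aeval f ps * Polynomial.aeval f (pb * pt)
        = Polynomial.aeval f (pb * p) := by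
      rw [← map_mul]
      congr 1
      rw [← hst]; ring
    have h2 : Polynomial.aeval f (pb * p) = 0 := by
      rw [map_mul, hCH, mul_zero]
    have h3 := congrArg (fun (Lm : Module.End ℂ (Fin d → ℂ)) => Lm w) (h1.trans h2)
    simp only [Module.End.mul_apply, LinearMap.zero_apply] at h3
    exact h3
  have hkill_t : Polynomial.aeval f pt wt = 0 := by
    have h1 : Polynomial.aeval f pt * Polynomial.aeval f (pa * ps)
        = Polynomial.aeval f (pa * p) := by
      rw [← map_mul]
      congr 1
      rw [← hst]; ring
    have h2 : Polynomial.aeval f (pa * p) = 0 := by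
      rw [map_mul, hCH, mul_zero]
    have h3 := congrArg (fun (Lm : Module.End ℂ (Fin d → ℂ)) => Lm w) (h1.trans h2)
    simp only [Module.End.mul_apply, LinearMap.zero_apply] at h3
    exact h3
  have hfinj : Function.Injective f := by
    have hBu : IsUnit Bm := (Matrix.isUnit_iff_isUnit_det Bm).mpr (isUnit_iff_ne_zero.mpr hdet)
    have hfu : IsUnit f := hBu.map
      (Matrix.toLinAlgEquiv' : Matrix (Fin d) (Fin d) ℂ ≃ₐ[ℂ] _).toAlgHom
    exact ((Module.End.isUnit_iff f).mp hfu).injective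
  have hcommk : ∀ (k : ℕ) (r : ℂ[X]) (v : Fin d → ℂ),
      Polynomial.aeval f r ((f ^ k) v) = (f ^ k) (Polynomial.aeval f r v) := by
    intro k r v
    have h1 : Polynomial.aeval f r * f ^ k = f ^ k * Polynomial.aeval f r := by
      have h2 := congrArg (Polynomial.aeval f) (mul_comm r (X ^ k))
      simpa [map_mul, map_pow, Polynomial.aeval_X] using h2
    have h3 := congrArg (fun (Lm : Module.End ℂ (Fin d → ℂ)) => Lm v) h1
    simp only [Module.End.mul_apply] at h3
    exact h3
  set L := LinearMap.toContinuousLinearMap (Polynomial.aeval f (pa * ps)) with hLdef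
  have hbt : ∀ k : ℕ, ‖(f ^ k) wt‖ ≤ ‖L‖ * M := by
    intro k
    have h1 : (f ^ k) wt = L ((f ^ k) w) := by
      have h0 : L ((f ^ k) w) = (f ^ k) (Polynomial.aeval f (pa * ps) w) := by
        rw [← hcommk k (pa * ps) w]
        exact congrFun (LinearMap.coe_toContinuousLinearMap' (Polynomial.aeval f (pa * ps))) _
      rw [h0]
    rw [h1]
    refine le_trans (L.le_opNorm _) ?_
    have h2 : ‖(f ^ k) w‖ ≤ M := by rw [← hfk k w]; exact hb k
    exact mul_le_mul_of_nonneg_left h2 (norm_nonneg L)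
  have hwt0 : wt = 0 := eq_zero_of_unstable f hfinj pt ht_mem wt hkill_t (‖L‖ * M) hbt
  have hstb := tendsto_pow_apply_of_stable f ps hs_mem ws hkill_s
  have hfinal : ∀ k : ℕ, (Bm ^ k).mulVec w = (f ^ k) ws := by
    intro k
    rw [hfk k w, hdecomp, map_add, hwt0, map_zero, zero_add]
  rw [show (fun k : ℕ => (Bm ^ k).mulVec w) = fun k => (f ^ k) ws from funext hfinal]
  exact hstb

end Stmt4Aux

/-- Let `A ∈ M_d(ℤ) ∩ GL_d(ℝ)` be hyperbolic, `F : ℝ^d → ℝ^d` a lift of a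
torus map with linearization `A`, and `H : ℝ^d → ℝ^d` with `A ∘ H = H ∘ F` and
`sup ‖H - id‖ < ∞`. Then for every `x ∈ ℝ^d` and `n ∈ ℤ^d`,
`A^k (H(x+n) - H(x) - n) → 0` as `k → ∞`; i.e. `H(x+n) - n ∈ H(x) + E^s(A)`. -/
theorem stmt4 (d : ℕ) (A : Matrix (Fin d) (Fin d) ℤ)
    (hdet : (A.map ((↑) : ℤ → ℝ)).det ≠ 0)
    (hhyp : ∀ μ : ℂ, (Matrix.charpoly (A.map ((↑) : ℤ → ℂ))).IsRoot μ → ‖μ‖ ≠ 1)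
    (F H : EuclideanSpace ℝ (Fin d) → EuclideanSpace ℝ (Fin d))
    (hlift : ∀ (x : EuclideanSpace ℝ (Fin d)) (n : Fin d → ℤ),
      F (x + intVec n) = F x + mulVecE (A.map ((↑) : ℤ → ℝ)) (intVec n))
    (hconj : ∀ x : EuclideanSpace ℝ (Fin d),
      mulVecE (A.map ((↑) : ℤ → ℝ)) (H x) = H (F x))
    (hbdd : ∃ C : ℝ, ∀ x : EuclideanSpace ℝ (Fin d), ‖H x - x‖ ≤ C) :
    ∀ (x : EuclideanSpace ℝ (Fin d)) (n : Fin d → ℤ),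
      Filter.Tendsto
        (fun k : ℕ =>
          mulVecE ((A.map ((↑) : ℤ → ℝ)) ^ k) (H (x + intVec n) - H x - intVec n))
        Filter.atTop (nhds 0) := by
  classical
  intro x n
  obtain ⟨C, hC⟩ := hbdd
  have hC0 : 0 ≤ C := le_trans (norm_nonneg _) (hC 0)
  set Ar : Matrix (Fin d) (Fin d) ℝ := A.map ((↑) : ℤ → ℝ) with hAr
  set Bm : Matrix (Fin d) (Fin d) ℂ := A.map ((↑) : ℤ → ℂ) with hBm
  -- integer matrices act on integer vectors
  have hAint : ∀ (B : Matrix (Fin d) (Fin d) ℤ) (m : Fin d → ℤ),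
      mulVecE (B.map ((↑) : ℤ → ℝ)) (intVec m) = intVec (B.mulVec m) := by
    intro B m
    ext i
    simp only [mulVecE, intVec, PiLp.toLp_apply, WithLp.ofLp_toLp, Matrix.mulVec, dotProduct,
      Matrix.map_apply]
    push_cast
    rfl
  -- powers commute with entrywise casts
  have hmap_powR : ∀ k : ℕ, Ar ^ k = (A ^ k).map ((↑) : ℤ → ℝ) := by
    intro k
    induction k with
    | zero =>
      funext i j
      simp [Matrix.one_apply, Matrix.map_apply, apply_ite]
    | succ k ih =>
      rw [pow_succ, pow_succ, ih]
      funext i j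
      simp only [Matrix.mul_apply, Matrix.map_apply, hAr]
      push_cast
      rfl
  have hmap_powC : ∀ k : ℕ, Bm ^ k = (A ^ k).map ((↑) : ℤ → ℂ) := by
    intro k
    induction k with
    | zero =>
      funext i j
      simp [Matrix.one_apply, Matrix.map_apply, apply_ite]
    | succ k ih =>
      rw [pow_succ, pow_succ, ih]
      funext i j
      simp only [Matrix.mul_apply, Matrix.map_apply, hBm]
      push_cast
      rfl
  -- lift iterates
  have hFiter : ∀ (k : ℕ) (z : EuclideanSpace ℝ (Fin d)) (m : Fin d → ℤ),
      F^[k] (z + intVec m) = F^[k] z + intVec ((A ^ k).mulVec m) := by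
    intro k
    induction k with
    | zero =>
      intro z m
      simp [Matrix.one_mulVec]
    | succ k ih =>
      intro z m
      rw [Function.iterate_succ_apply', Function.iterate_succ_apply', ih, hlift, hAint,
        Matrix.mulVec_mulVec, ← pow_succ']
  -- conjugacy iterates
  have hHiter : ∀ (k : ℕ) (z : EuclideanSpace ℝ (Fin d)),
      mulVecE (Ar ^ k) (H z) = H (F^[k] z) := by
    intro k
    induction k with
    | zero =>
      intro z
      simp [mulVecE, Matrix.one_mulVec]
    | succ k ih =>
      intro z
      have h1 : mulVecE (Ar ^ (k+1)) (H z) = mulVecE Ar (mulVecE (Ar ^ k) (H z)) := by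
        show WithLp.toLp 2 ((Ar ^ (k+1)).mulVec (H z))
          = WithLp.toLp 2 (Ar.mulVec ((Ar ^ k).mulVec (H z)))
        rw [Matrix.mulVec_mulVec, ← pow_succ']
      rw [h1, ih, hconj]
      exact congrArg H (Function.iterate_succ_apply' F k z).symm
  set v : EuclideanSpace ℝ (Fin d) := H (x + intVec n) - H x - intVec n with hv
  -- the orbit identity and bound
  have hlin : ∀ k : ℕ, mulVecE (Ar ^ k) v
      = H (F^[k] x + intVec ((A ^ k).mulVec n)) - H (F^[k] x) - intVec ((A ^ k).mulVec n) := by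
    intro k
    have h1 : mulVecE (Ar ^ k) v
        = mulVecE (Ar ^ k) (H (x + intVec n)) - mulVecE (Ar ^ k) (H x)
          - mulVecE (Ar ^ k) (intVec n) := by
      ext i
      simp only [mulVecE, hv, PiLp.toLp_apply, WithLp.ofLp_sub, Matrix.mulVec, dotProduct,
        PiLp.sub_apply, Pi.sub_apply, mul_sub,
        Finset.sum_sub_distrib]
    have h2 : mulVecE (Ar ^ k) (intVec n) = intVec ((A ^ k).mulVec n) := by
      rw [hmap_powR k]
      exact hAint (A ^ k) n
    rw [h1, hHiter, hHiter, h2, hFiter]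
  have hbound : ∀ k : ℕ, ‖mulVecE (Ar ^ k) v‖ ≤ C + C := by
    intro k
    rw [hlin k]
    set z := F^[k] x with hz
    set wv := intVec ((A ^ k).mulVec n) with hwv
    have h2 : H (z + wv) - H z - wv = (H (z + wv) - (z + wv)) - (H z - z) := by abel
    rw [h2]
    exact le_trans (norm_sub_le _ _) (add_le_add (hC _) (hC _))
  -- complexification
  set wc : Fin d → ℂ := fun i => ((v i : ℝ) : ℂ) with hwc
  have hcmul : ∀ k : ℕ, (Bm ^ k).mulVec wc = fun i => (((mulVecE (Ar ^ k) v) i : ℝ) : ℂ) := by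
    intro k
    funext i
    simp only [hmap_powC k, hmap_powR k, mulVecE, PiLp.toLp_apply, Matrix.mulVec, dotProduct,
      Matrix.map_apply, hwc]
    push_cast
    rfl
  have hcoord : ∀ (y : EuclideanSpace ℝ (Fin d)) (i : Fin d), |y i| ≤ ‖y‖ := by
    intro y i
    rw [EuclideanSpace.norm_eq, ← Real.sqrt_sq_eq_abs]
    apply Real.sqrt_le_sqrt
    have h1 : |y i| ^ 2 ≤ ∑ j, ‖y j‖ ^ 2 := by
      have := Finset.single_le_sum (f := fun j => ‖y j‖ ^ 2)
        (fun j _ => by positivity) (Finset.mem_univ i)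
      simpa [Real.norm_eq_abs, sq_abs] using this
    simpa [sq_abs] using h1
  have hbC : ∀ k : ℕ, ‖(Bm ^ k).mulVec wc‖ ≤ C + C := by
    intro k
    rw [hcmul k, pi_norm_le_iff_of_nonneg (by linarith)]
    intro i
    rw [Complex.norm_real]
    exact le_trans (hcoord _ i) (hbound k)
  have hdetC : Bm.det ≠ 0 := by
    have h1 : Ar.det = ((A.det : ℤ) : ℝ) := ((Int.castRingHom ℝ).map_det A).symm
    have h2 : Bm.det = ((A.det : ℤ) : ℂ) := ((Int.castRingHom ℂ).map_det A).symm
    have h3 : (A.det : ℤ) ≠ 0 := by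
      intro h
      apply hdet
      rw [h1, h]
      simp
    rw [h2]
    exact_mod_cast h3
  have hcore := Stmt4Aux.core Bm hdetC hhyp wc (C + C) hbC
  -- transfer back to the real Euclidean space
  have hcomp : ∀ i : Fin d, Tendsto (fun k : ℕ => (mulVecE (Ar ^ k) v) i) atTop (nhds 0) := by
    intro i
    have h1 := (tendsto_pi_nhds.mp hcore) i
    have h2 : (fun k : ℕ => ((Bm ^ k).mulVec wc) i)
        = fun k : ℕ => (((mulVecE (Ar ^ k) v) i : ℝ) : ℂ) := by
      funext k
      rw [hcmul k]
    rw [h2] at h1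
    have h3 := (Complex.continuous_re.tendsto (0 : ℂ)).comp (by simpa using h1)
    simpa [Function.comp_def] using h3
  have hpi : Tendsto (fun k : ℕ => (fun i => (mulVecE (Ar ^ k) v) i : Fin d → ℝ))
      atTop (nhds 0) := by
    rw [tendsto_pi_nhds]
    intro i
    simpa using hcomp i
  have hfin := ((PiLp.continuous_toLp 2 (fun _ : Fin d => ℝ)).tendsto
    (0 : Fin d → ℝ)).comp hpi
  exact hfin
end

section
/- Let A ∈ M_d(ℤ) ∩ GL_d(ℝ) be a hyperbolic integer matrix with stable subspace E^s(A) = {v ∈ ℝ^d : A^k v → 0 as k → +∞}, and let λ ∈ (0,1) and C₁ > 0 be constants such that ‖A^m v‖ ≤ C₁ λ^m ‖v‖ for every v ∈ E^s(A) and every m ≥ 0. Let F : ℝ^d → ℝ^d be a bijection that is a lift of a torus map with linearization A, and let H : ℝ^d → ℝ^d satisfy A ∘ H = H ∘ F and sup_{x∈ℝ^d} ‖H(x) − x‖ ≤ C₀ < ∞. Then for every m ≥ 1, every x ∈ ℝ^d, and every n ∈ ℤ^d with A^{-i} n ∈ ℤ^d for all 1 ≤ i ≤ m, one has ‖H(x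 + n) − H(x) − n‖ ≤ 2C₀C₁ · λ^m. -/
section StableAux

open Polynomial Filter

lemma duhamel {V : Type*} [NormedAddCommGroup V] [Module ℂ V] [NormSMulClass ℂ V]
    (μ : ℂ) (hμ : ‖μ‖ < 1) (w g : ℕ → V)
    (hrec : ∀ k, w (k + 1) = μ • w k + g k)
    (hg : Filter.Tendsto g Filter.atTop (nhds 0)) :
    Filter.Tendsto w Filter.atTop (nhds 0) := by
  rw [NormedAddCommGroup.tendsto_nhds_zero] at hg ⊢
  intro ε hε
  set c := ‖μ‖ with hc
  have hc0 : (0:ℝ) ≤ c := norm_nonneg μ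
  have h1c : (0:ℝ) < 1 - c := by linarith
  set δ : ℝ := ε * (1 - c) / 2 with hδdef
  have hδ : (0:ℝ) < δ := by positivity
  obtain ⟨K, hK⟩ := eventually_atTop.mp (hg δ hδ)
  have hhalf : δ / (1 - c) = ε / 2 := by
    rw [hδdef]; field_simp
  -- key estimate
  have key : ∀ k : ℕ, ‖w (K + k)‖ ≤ c ^ k * ‖w K‖ + δ / (1 - c) := by
    intro k
    induction k with
    | zero =>
      have : (0:ℝ) ≤ δ / (1 - c) := by positivity
      simpa using by linarith
    | succ k ih =>
      have h1 : w (K + (k + 1)) = μ • w (K + k) + g (K + k) := by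
        have := hrec (K + k); rw [← this]; ring_nf
      have h2 : ‖w (K + (k+1))‖ ≤ c * ‖w (K + k)‖ + ‖g (K + k)‖ := by
        rw [h1]
        calc ‖μ • w (K + k) + g (K + k)‖ ≤ ‖μ • w (K + k)‖ + ‖g (K + k)‖ := norm_add_le _ _
          _ ≤ c * ‖w (K + k)‖ + ‖g (K + k)‖ := by rw [norm_smul]
      have h3 : ‖g (K + k)‖ ≤ δ := le_of_lt (hK (K + k) (Nat.le_add_right _ _))
      have h4 : c * ‖w (K + k)‖ ≤ c * (c ^ k * ‖w K‖ + δ / (1 - c)) :=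
        mul_le_mul_of_nonneg_left ih hc0
      have h4' : c * (c ^ k * ‖w K‖ + δ / (1 - c)) = c * (c ^ k * ‖w K‖) + c * (δ / (1 - c)) := by
        ring
      have h5 : c * (δ / (1 - c)) + δ ≤ δ / (1 - c) := by
        have hne : (1 - c) ≠ 0 := ne_of_gt h1c
        have : c * (δ / (1 - c)) + δ = δ / (1 - c) := by field_simp; ring
        linarith [this]
      have hp : c ^ (k + 1) * ‖w K‖ = c * (c ^ k * ‖w K‖) := by ring
      linarith
  -- finish
  have hgeo : Filter.Tendsto (fun k : ℕ => c ^ k * ‖w K‖) Filter.atTop (nhds 0) := by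
    simpa using (tendsto_pow_atTop_nhds_zero_of_lt_one hc0 hμ).mul_const ‖w K‖
  rw [NormedAddCommGroup.tendsto_nhds_zero] at hgeo
  obtain ⟨k₀, hk₀⟩ := eventually_atTop.mp (hgeo (ε / 2) (by positivity))
  rw [eventually_atTop]
  refine ⟨K + k₀, fun n hn => ?_⟩
  have hKn : K ≤ n := le_trans (Nat.le_add_right _ _) hn
  have hkk : k₀ ≤ n - K := by omega
  have hnn : K + (n - K) = n := by omega
  have := key (n - K)
  rw [hnn] at this
  have h6 : ‖c ^ (n - K) * ‖w K‖‖ < ε / 2 := hk₀ _ hkk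
  have h7 : c ^ (n - K) * ‖w K‖ < ε / 2 := (le_abs_self _).trans_lt (by rwa [Real.norm_eq_abs] at h6)
  linarith [hhalf ▸ this]

lemma lemA {V : Type*} [NormedAddCommGroup V] [NormedSpace ℂ V] :
    ∀ (N : ℕ) (f : Module.End ℂ V) (q : ℂ[X]), q.natDegree ≤ N → q ≠ 0 →
    (∀ μ : ℂ, q.IsRoot μ → ‖μ‖ < 1) → ∀ w : V, (Polynomial.aeval f q) w = 0 →
    Filter.Tendsto (fun k : ℕ => (f ^ k) w) Filter.atTop (nhds 0) := by
  intro N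
  induction N with
  | zero =>
    intro f q hdeg hq hroots w hw
    have h0 : q.natDegree = 0 := Nat.le_zero.mp hdeg
    obtain ⟨c, rfl⟩ := Polynomial.natDegree_eq_zero.mp h0
    have hc : c ≠ 0 := fun h => hq (by simp [h])
    have : c • w = 0 := by
      simpa [Polynomial.aeval_C, Module.algebraMap_end_apply] using hw
    have hw0 : w = 0 := by
      have := congrArg (fun x => c⁻¹ • x) this
      simpa [smul_smul, inv_mul_cancel₀ hc] using this
    simp [hw0]
  | succ N ih =>
    intro f q hdeg hq hroots w hw
    by_cases h0 : q.natDegree = 0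
    · exact ih f q (by omega) hq hroots w hw
    · -- get a root
      obtain ⟨μ, hμ⟩ := IsAlgClosed.exists_root q
        (fun hd => h0 (Polynomial.natDegree_eq_zero_iff_degree_le_zero.mpr (le_of_eq hd)))
      obtain ⟨q', hq'⟩ := Polynomial.dvd_iff_isRoot.mpr hμ
      have hq'0 : q' ≠ 0 := by rintro rfl; exact hq (by simpa using hq')
      have hXμ : (X - C μ) ≠ 0 := Polynomial.X_sub_C_ne_zero μ
      have hdeg' : q'.natDegree ≤ N := by
        have h := Polynomial.natDegree_mul hXμ hq'0
        rw [hq', h, Polynomial.natDegree_X_sub_C] at hdeg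
        omega
      have hroots' : ∀ ν : ℂ, q'.IsRoot ν → ‖ν‖ < 1 := by
        intro ν hν
        apply hroots
        rw [hq']
        simpa [Polynomial.IsRoot, Polynomial.eval_mul] using Or.inr hν
      -- u := f w - μ • w
      set u : V := f w - μ • w with hu
      have hmain : (Polynomial.aeval f q') u = 0 := by
        have h1 : (Polynomial.aeval f (X - C μ)) w = u := by
          simp [hu, Module.algebraMap_end_apply, Polynomial.aeval_X, Polynomial.aeval_C,
            LinearMap.sub_apply]
        have h2 : q = q' * (X - C μ) := by rw [hq']; ring
        calc (Polynomial.aeval f q') u = (Polynomial.aeval f q') ((Polynomial.aeval f (X - C μ)) w) := by rw [h1]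
          _ = (Polynomial.aeval f (q' * (X - C μ))) w := by rw [map_mul]; rfl
          _ = (Polynomial.aeval f q) w := by rw [← h2]
          _ = 0 := hw
      have hg : Filter.Tendsto (fun k : ℕ => (f ^ k) u) Filter.atTop (nhds 0) :=
        ih f q' hdeg' hq'0 hroots' u hmain
      have hμ1 : ‖μ‖ < 1 := hroots μ hμ
      apply duhamel μ hμ1 (fun k => (f ^ k) w) (fun k => (f ^ k) u) ?_ hg
      intro k
      show (f ^ (k+1)) w = μ • (f ^ k) w + (f ^ k) u
      have : (f ^ (k+1)) w = (f ^ k) (f w) := by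
        rw [pow_succ]; rfl
      rw [this]
      have : f w = μ • w + u := by rw [hu]; abel
      rw [this, map_add, map_smul]

lemma lemB {V : Type*} [NormedAddCommGroup V] [NormedSpace ℂ V] [FiniteDimensional ℂ V] :
    ∀ (N : ℕ) (f : Module.End ℂ V) (q : ℂ[X]), q.natDegree ≤ N → q ≠ 0 →
    (∀ μ : ℂ, q.IsRoot μ → 1 < ‖μ‖) → ∀ w : V, (Polynomial.aeval f q) w = 0 →
    ∀ Mb : ℝ, (∀ k : ℕ, ‖(f ^ k) w‖ ≤ Mb) → w = 0 := by
  intro N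
  induction N with
  | zero =>
    intro f q hdeg hq hroots w hw Mb hMb
    have h0 : q.natDegree = 0 := Nat.le_zero.mp hdeg
    obtain ⟨c, rfl⟩ := Polynomial.natDegree_eq_zero.mp h0
    have hc : c ≠ 0 := fun h => hq (by simp [h])
    have : c • w = 0 := by
      simpa [Polynomial.aeval_C, Module.algebraMap_end_apply] using hw
    have := congrArg (fun x => c⁻¹ • x) this
    simpa [smul_smul, inv_mul_cancel₀ hc] using this
  | succ N ih =>
    intro f q hdeg hq hroots w hw Mb hMb
    by_cases h0 : q.natDegree = 0
    · exact ih f q (by omega) hq hroots w hw Mb hMb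
    · obtain ⟨μ, hμ⟩ := IsAlgClosed.exists_root q
        (fun hd => h0 (Polynomial.natDegree_eq_zero_iff_degree_le_zero.mpr (le_of_eq hd)))
      obtain ⟨q', hq'⟩ := Polynomial.dvd_iff_isRoot.mpr hμ
      have hq'0 : q' ≠ 0 := by rintro rfl; exact hq (by simpa using hq')
      have hXμ : (X - C μ) ≠ 0 := Polynomial.X_sub_C_ne_zero μ
      have hdeg' : q'.natDegree ≤ N := by
        have h := Polynomial.natDegree_mul hXμ hq'0
        rw [hq', h, Polynomial.natDegree_X_sub_C] at hdeg
        omega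
      have hroots' : ∀ ν : ℂ, q'.IsRoot ν → 1 < ‖ν‖ := by
        intro ν hν
        apply hroots
        rw [hq']
        simpa [Polynomial.IsRoot, Polynomial.eval_mul] using Or.inr hν
      -- u := q'(f) w is an eigenvector
      set u : V := (Polynomial.aeval f q') w with hu
      have heig : f u = μ • u := by
        have h1 : (Polynomial.aeval f (X - C μ)) u = 0 := by
          rw [hu]
          calc (Polynomial.aeval f (X - C μ)) ((Polynomial.aeval f q') w)
              = (Polynomial.aeval f ((X - C μ) * q')) w := by rw [map_mul]; rfl
            _ = (Polynomial.aeval f q) w := by rw [← hq']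
            _ = 0 := hw
        have h2 : f u - μ • u = 0 := by
          simpa [Module.algebraMap_end_apply, LinearMap.sub_apply] using h1
        linear_combination (norm := module) h2
      have hiter : ∀ k : ℕ, (f ^ k) u = μ ^ k • u := by
        intro k
        induction k with
        | zero => simp
        | succ k ihk =>
          have : (f ^ (k+1)) u = f ((f ^ k) u) := by rw [pow_succ']; rfl
          rw [this, ihk, map_smul, heig, smul_smul, ← pow_succ]
      -- bound on the orbit of u
      set L := LinearMap.toContinuousLinearMap (Polynomial.aeval f q' : V →ₗ[ℂ] V) with hL
      have hcomm : ∀ k : ℕ, (f ^ k) u = (Polynomial.aeval f q') ((f ^ k) w) := by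
        intro k
        rw [hu]
        have h1 : (f : Module.End ℂ V) ^ k = Polynomial.aeval f (X ^ k : ℂ[X]) := by
          simp
        calc (f ^ k) ((Polynomial.aeval f q') w)
            = (Polynomial.aeval f ((X:ℂ[X]) ^ k * q')) w := by rw [map_mul, h1]; rfl
          _ = (Polynomial.aeval f (q' * (X:ℂ[X]) ^ k)) w := by rw [mul_comm]
          _ = (Polynomial.aeval f q') ((f ^ k) w) := by rw [map_mul, h1]; rfl
      have hbound : ∀ k : ℕ, ‖μ‖ ^ k * ‖u‖ ≤ ‖L‖ * Mb := by
        intro k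
        have h1 : ‖(f ^ k) u‖ ≤ ‖L‖ * Mb := by
          rw [hcomm k]
          calc ‖(Polynomial.aeval f q') ((f ^ k) w)‖ = ‖L ((f ^ k) w)‖ := rfl
            _ ≤ ‖L‖ * ‖(f ^ k) w‖ := L.le_opNorm _
            _ ≤ ‖L‖ * Mb := by
                apply mul_le_mul_of_nonneg_left (hMb k) (norm_nonneg L)
        rw [hiter k] at h1
        simpa [norm_smul, norm_pow] using h1
      have hu0 : u = 0 := by
        by_contra hne
        have hupos : 0 < ‖u‖ := norm_pos_iff.mpr hne
        obtain ⟨k, hk⟩ := pow_unbounded_of_one_lt (‖L‖ * Mb / ‖u‖) (hroots μ hμ)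
        have := hbound k
        rw [div_lt_iff₀ hupos] at hk
        linarith
      exact ih f q' hdeg' hq'0 hroots' w (hu ▸ hu0) Mb hMb

lemma coprime_prod_right (p : ℂ[X]) (t : Multiset ℂ)
    (h : ∀ b ∈ t, IsCoprime p (X - C b)) :
    IsCoprime p ((t.map fun b => X - C b).prod) := by
  induction t using Multiset.induction with
  | empty => simpa using isCoprime_one_right
  | cons a s ih =>
    rw [Multiset.map_cons, Multiset.prod_cons]
    exact (h a (Multiset.mem_cons_self a s)).mul_right
      (ih fun b hb => h b (Multiset.mem_cons_of_mem hb))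

lemma coprime_prod_left (q : ℂ[X]) (s : Multiset ℂ)
    (h : ∀ a ∈ s, IsCoprime (X - C a) q) :
    IsCoprime ((s.map fun a => X - C a).prod) q := by
  induction s using Multiset.induction with
  | empty => simpa using isCoprime_one_left
  | cons a s ih =>
    rw [Multiset.map_cons, Multiset.prod_cons]
    exact (h a (Multiset.mem_cons_self a s)).mul_left
      (ih fun b hb => h b (Multiset.mem_cons_of_mem hb))

lemma root_of_prod {t : Multiset ℂ} {ν : ℂ}
    (h : ((t.map fun b => X - C b).prod).IsRoot ν) : ν ∈ t := by
  rw [Polynomial.IsRoot, Polynomial.eval_multiset_prod] at h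
  rw [Multiset.map_map] at h
  rw [Multiset.prod_eq_zero_iff] at h
  obtain ⟨b, hb, hb0⟩ := Multiset.mem_map.mp h
  have hνb : ν - b = 0 := by simpa using hb0
  have : ν = b := by
    have := sub_eq_zero.mp hνb
    exact this
  rw [this]; exact hb

lemma specC {d : ℕ} (M : Matrix (Fin d) (Fin d) ℂ)
    (hhyp : ∀ μ : ℂ, M.charpoly.IsRoot μ → ‖μ‖ ≠ 1)
    (v : Fin d → ℂ) (Mb : ℝ) (hb : ∀ k : ℕ, ‖(M ^ k).mulVec v‖ ≤ Mb) :
    Filter.Tendsto (fun k : ℕ => (M ^ k).mulVec v) Filter.atTop (nhds 0) := by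
  classical
  set f : Module.End ℂ (Fin d → ℂ) := Matrix.toLinAlgEquiv' M with hf
  have hfk : ∀ k : ℕ, ∀ x : Fin d → ℂ, (f ^ k) x = (M ^ k).mulVec x := by
    intro k x
    rw [hf, ← map_pow]
    rfl
  set q : ℂ[X] := M.charpoly with hqdef
  have hqmonic : q.Monic := M.charpoly_monic
  have hq0 : q ≠ 0 := hqmonic.ne_zero
  have hCH : (Polynomial.aeval f q) = 0 := by
    rw [hf, Polynomial.aeval_algHom_apply (Matrix.toLinAlgEquiv' (R := ℂ) (n := Fin d))]
    rw [Matrix.aeval_self_charpoly]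
    exact map_zero _
  -- splitting of q into stable and unstable parts
  have hsplit : q = (q.roots.map fun a => X - C a).prod :=
    (IsAlgClosed.splits q).eq_prod_roots_of_monic hqmonic
  set P : ℂ → Prop := fun μ => ‖μ‖ < 1 with hP
  set s₁ := q.roots.filter P with hs₁
  set s₂ := q.roots.filter (fun μ => ¬ P μ) with hs₂
  set ps := (s₁.map fun a => X - C a).prod with hps
  set pu := (s₂.map fun a => X - C a).prod with hpu
  have hqprod : q = ps * pu := by
    calc q = (q.roots.map fun a => X - C a).prod := hsplit
      _ = ((s₁ + s₂).map fun a => X - C a).prod := by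
          rw [hs₁, hs₂, Multiset.filter_add_not P q.roots]
      _ = ps * pu := by rw [Multiset.map_add, Multiset.prod_add]
  have hq0' : ps * pu ≠ 0 := hqprod ▸ hq0
  have hps0 : ps ≠ 0 := left_ne_zero_of_mul hq0'
  have hpu0 : pu ≠ 0 := right_ne_zero_of_mul hq0'
  have hmem₁ : ∀ a ∈ s₁, ‖a‖ < 1 := fun a ha => (Multiset.mem_filter.mp ha).2
  have hmem₂ : ∀ a ∈ s₂, 1 < ‖a‖ := by
    intro a ha
    have h2 := Multiset.mem_filter.mp ha
    have hroot : q.IsRoot a := (Polynomial.mem_roots hq0).mp h2.1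
    have hne := hhyp a hroot
    have hge : ¬ ‖a‖ < 1 := h2.2
    rcases lt_or_ge 1 ‖a‖ with h | h
    · exact h
    · exact absurd (lt_of_le_of_ne h hne) hge
  have hrootsps : ∀ ν : ℂ, ps.IsRoot ν → ‖ν‖ < 1 := fun ν hν => hmem₁ ν (root_of_prod hν)
  have hrootspu : ∀ ν : ℂ, pu.IsRoot ν → 1 < ‖ν‖ := fun ν hν => hmem₂ ν (root_of_prod hν)
  have hcop : IsCoprime ps pu := by
    apply coprime_prod_left
    intro a ha
    apply coprime_prod_right
    intro b hb
    apply Polynomial.isCoprime_X_sub_C_of_isUnit_sub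
    have hne : a ≠ b := by
      intro h
      exact absurd (hmem₁ a ha) (by rw [h]; exact not_lt.mpr (le_of_lt (hmem₂ b hb)))
    exact (sub_ne_zero.mpr hne).isUnit
  obtain ⟨a, b, hab⟩ := hcop
  set wu := (Polynomial.aeval f (a * ps)) v with hwu
  set ws := (Polynomial.aeval f (b * pu)) v with hws
  have hsum : wu + ws = v := by
    calc wu + ws = (Polynomial.aeval f (a * ps) + Polynomial.aeval f (b * pu)) v := rfl
      _ = (Polynomial.aeval f (a * ps + b * pu)) v := by rw [map_add]
      _ = (Polynomial.aeval f 1) v := by rw [hab]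
      _ = v := by simp
  -- commuting with powers of f
  have hcommk : ∀ (p : ℂ[X]) (k : ℕ) (x : Fin d → ℂ),
      (Polynomial.aeval f p) ((f ^ k) x) = (f ^ k) ((Polynomial.aeval f p) x) := by
    intro p k x
    have h1 : (f : Module.End ℂ (Fin d → ℂ)) ^ k = Polynomial.aeval f (X ^ k : ℂ[X]) := by simp
    calc (Polynomial.aeval f p) ((f ^ k) x) = (Polynomial.aeval f (p * X ^ k)) x := by
          rw [map_mul, h1]; rfl
      _ = (Polynomial.aeval f ((X:ℂ[X]) ^ k * p)) x := by rw [mul_comm]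
      _ = (f ^ k) ((Polynomial.aeval f p) x) := by rw [map_mul, h1]; rfl
  -- pu kills wu, ps kills ws
  have hpuwu : (Polynomial.aeval f pu) wu = 0 := by
    have hpoly : pu * (a * ps) = a * q := by rw [hqprod]; ring
    calc (Polynomial.aeval f pu) wu = (Polynomial.aeval f (pu * (a * ps))) v := by
          rw [map_mul]; rfl
      _ = (Polynomial.aeval f (a * q)) v := by rw [hpoly]
      _ = (Polynomial.aeval f a) ((Polynomial.aeval f q) v) := by rw [map_mul]; rfl
      _ = 0 := by rw [hCH]; simp
  have hpsws : (Polynomial.aeval f ps) ws = 0 := by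
    have hpoly : ps * (b * pu) = b * q := by rw [hqprod]; ring
    calc (Polynomial.aeval f ps) ws = (Polynomial.aeval f (ps * (b * pu))) v := by
          rw [map_mul]; rfl
      _ = (Polynomial.aeval f (b * q)) v := by rw [hpoly]
      _ = (Polynomial.aeval f b) ((Polynomial.aeval f q) v) := by rw [map_mul]; rfl
      _ = 0 := by rw [hCH]; simp
  -- the unstable part is zero
  set L := LinearMap.toContinuousLinearMap
    (Polynomial.aeval f (a * ps) : (Fin d → ℂ) →ₗ[ℂ] (Fin d → ℂ)) with hLdef
  have hMb0 : (0:ℝ) ≤ Mb := le_trans (norm_nonneg _) (hb 0)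
  have hbwu : ∀ k : ℕ, ‖(f ^ k) wu‖ ≤ ‖L‖ * Mb := by
    intro k
    have h1 : (f ^ k) wu = L ((f ^ k) v) := (hcommk (a * ps) k v).symm
    rw [h1]
    calc ‖L ((f ^ k) v)‖ ≤ ‖L‖ * ‖(f ^ k) v‖ := L.le_opNorm _
      _ ≤ ‖L‖ * Mb := by
          apply mul_le_mul_of_nonneg_left ?_ (norm_nonneg L)
          rw [hfk k v]; exact hb k
  have hwu0 : wu = 0 :=
    lemB pu.natDegree f pu le_rfl hpu0 hrootspu wu hpuwu (‖L‖ * Mb) hbwu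
  have hvws : v = ws := by rw [← hsum, hwu0, zero_add]
  have hfin : Filter.Tendsto (fun k : ℕ => (f ^ k) ws) Filter.atTop (nhds 0) :=
    lemA ps.natDegree f ps le_rfl hps0 hrootsps ws hpsws
  apply hfin.congr
  intro k
  show (f ^ k) ws = (M ^ k).mulVec v
  rw [hfk k ws, ← hvws]

lemma coord_le {d : ℕ} (x : EuclideanSpace ℝ (Fin d)) (i : Fin d) : |x i| ≤ ‖x‖ := by
  rw [EuclideanSpace.norm_eq, ← Real.sqrt_sq_eq_abs]
  apply Real.sqrt_le_sqrt
  have : x i ^ 2 = ‖x i‖ ^ 2 := by rw [Real.norm_eq_abs, sq_abs]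
  rw [this]
  exact Finset.single_le_sum (f := fun j => ‖x j‖ ^ 2) (fun j _ => sq_nonneg _)
    (Finset.mem_univ i)

lemma bridge {d : ℕ} (A : Matrix (Fin d) (Fin d) ℤ)
    (hhyp : ∀ μ : ℂ, (Matrix.charpoly (A.map ((↑) : ℤ → ℂ))).IsRoot μ → ‖μ‖ ≠ 1)
    (v : EuclideanSpace ℝ (Fin d)) (Mb : ℝ)
    (hb : ∀ k : ℕ, ‖mulVecE ((A.map ((↑) : ℤ → ℝ)) ^ k) v‖ ≤ Mb) :
    Filter.Tendsto (fun k : ℕ => mulVecE ((A.map ((↑) : ℤ → ℝ)) ^ k) v)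
      Filter.atTop (nhds 0) := by
  classical
  set Ar : Matrix (Fin d) (Fin d) ℝ := A.map ((↑) : ℤ → ℝ) with hAr
  set Mc : Matrix (Fin d) (Fin d) ℂ := A.map ((↑) : ℤ → ℂ) with hMc
  set vc : Fin d → ℂ := fun i => ((v i : ℝ) : ℂ) with hvc
  have hMck : ∀ k : ℕ, Mc ^ k = (A ^ k).map ((↑) : ℤ → ℂ) := by
    intro k
    rw [hMc]
    have : A.map ((↑) : ℤ → ℂ) = (Int.castRingHom ℂ).mapMatrix A := rfl
    rw [this, ← map_pow]
    rfl
  have hArk : ∀ k : ℕ, Ar ^ k = (A ^ k).map ((↑) : ℤ → ℝ) := by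
    intro k
    rw [hAr]
    have : A.map ((↑) : ℤ → ℝ) = (Int.castRingHom ℝ).mapMatrix A := rfl
    rw [this, ← map_pow]
    rfl
  have hcomp : ∀ (k : ℕ) (i : Fin d),
      (Mc ^ k).mulVec vc i = ((((Ar ^ k).mulVec v) i : ℝ) : ℂ) := by
    intro k i
    rw [hMck, hArk]
    simp only [Matrix.mulVec, dotProduct, Matrix.map_apply, hvc]
    push_cast
    rfl
  have hMb0 : (0:ℝ) ≤ Mb := le_trans (norm_nonneg _) (hb 0)
  have hbc : ∀ k : ℕ, ‖(Mc ^ k).mulVec vc‖ ≤ Mb := by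
    intro k
    rw [pi_norm_le_iff_of_nonneg hMb0]
    intro i
    rw [hcomp k i, Complex.norm_real, Real.norm_eq_abs]
    exact le_trans (coord_le (mulVecE (Ar ^ k) v) i) (hb k)
  have hcplx := specC Mc hhyp vc Mb hbc
  -- componentwise real convergence
  have hreal : ∀ i : Fin d, Filter.Tendsto (fun k : ℕ => ((Ar ^ k).mulVec v) i)
      Filter.atTop (nhds 0) := by
    intro i
    have h1 : Filter.Tendsto (fun k : ℕ => ((Mc ^ k).mulVec vc) i) Filter.atTop (nhds 0) := by
      have := (continuous_apply i).tendsto (0 : Fin d → ℂ)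
      simpa [Function.comp_def] using this.comp hcplx
    rw [tendsto_zero_iff_norm_tendsto_zero] at h1 ⊢
    apply h1.congr
    intro k
    rw [hcomp k i, Complex.norm_real]
  have hpi : Filter.Tendsto (fun k : ℕ => (Ar ^ k).mulVec v)
      Filter.atTop (nhds (0 : Fin d → ℝ)) := by
    rw [tendsto_pi_nhds]
    intro i
    simpa using hreal i
  -- transfer to EuclideanSpace
  have e := (PiLp.continuousLinearEquiv 2 ℝ (fun _ : Fin d => ℝ)).symm
  have h2 : Filter.Tendsto
      (fun k : ℕ => (PiLp.continuousLinearEquiv 2 ℝ (fun _ : Fin d => ℝ)).symm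
        ((Ar ^ k).mulVec v)) Filter.atTop
      (nhds ((PiLp.continuousLinearEquiv 2 ℝ (fun _ : Fin d => ℝ)).symm 0)) :=
    ((PiLp.continuousLinearEquiv 2 ℝ (fun _ : Fin d => ℝ)).symm.continuous.tendsto 0).comp hpi
  rw [map_zero] at h2
  exact h2

end StableAux

/-- Let `A ∈ M_d(ℤ) ∩ GL_d(ℝ)` be hyperbolic with stable subspace
`E^s(A) = {v : A^k v → 0}` and constants `λ ∈ (0,1)`, `C₁ > 0` with
`‖A^m v‖ ≤ C₁ λ^m ‖v‖` for `v ∈ E^s(A)`. Let `F` be a bijective lift of a torus map with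
linearization `A` and `H` satisfy `A ∘ H = H ∘ F`, `‖H - id‖ ≤ C₀`. Then for every `m ≥ 1`,
every `x`, and every `n ∈ ℤ^d` with `A^(-i) n ∈ ℤ^d` for all `1 ≤ i ≤ m`,
`‖H(x+n) - H(x) - n‖ ≤ 2 C₀ C₁ λ^m`. -/
theorem stmt6 (d : ℕ) (A : Matrix (Fin d) (Fin d) ℤ)
    (hdet : (A.map ((↑) : ℤ → ℝ)).det ≠ 0)
    (hhyp : ∀ μ : ℂ, (Matrix.charpoly (A.map ((↑) : ℤ → ℂ))).IsRoot μ → ‖μ‖ ≠ 1)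
    (lam C₁ : ℝ) (hlam : 0 < lam ∧ lam < 1) (hC₁ : 0 < C₁)
    (hstab : ∀ v : EuclideanSpace ℝ (Fin d),
      Filter.Tendsto (fun k : ℕ => mulVecE ((A.map ((↑) : ℤ → ℝ)) ^ k) v)
        Filter.atTop (nhds 0) →
      ∀ m : ℕ, ‖mulVecE ((A.map ((↑) : ℤ → ℝ)) ^ m) v‖ ≤ C₁ * lam ^ m * ‖v‖)
    (F H : EuclideanSpace ℝ (Fin d) → EuclideanSpace ℝ (Fin d))
    (hFbij : Function.Bijective F)
    (hlift : ∀ (x : EuclideanSpace ℝ (Fin d)) (n : Fin d → ℤ),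
      F (x + intVec n) = F x + mulVecE (A.map ((↑) : ℤ → ℝ)) (intVec n))
    (hconj : ∀ x : EuclideanSpace ℝ (Fin d),
      mulVecE (A.map ((↑) : ℤ → ℝ)) (H x) = H (F x))
    (C₀ : ℝ) (hC₀ : ∀ x : EuclideanSpace ℝ (Fin d), ‖H x - x‖ ≤ C₀) :
    ∀ m : ℕ, 1 ≤ m → ∀ (x : EuclideanSpace ℝ (Fin d)) (n : Fin d → ℤ),
      (∀ i : ℕ, 1 ≤ i → i ≤ m → ∃ n' : Fin d → ℤ, (A ^ i).mulVec n' = n) →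
      ‖H (x + intVec n) - H x - intVec n‖ ≤ 2 * C₀ * C₁ * lam ^ m := by
  intro m hm x n hn
  set Ar : Matrix (Fin d) (Fin d) ℝ := A.map ((↑) : ℤ → ℝ) with hAr
  set g : (Fin d → ℤ) → EuclideanSpace ℝ (Fin d) → EuclideanSpace ℝ (Fin d) :=
    fun p y => H (y + intVec p) - H y - intVec p with hg
  -- integer vectors are mapped to integer vectors
  have hint : ∀ (B : Matrix (Fin d) (Fin d) ℤ) (p : Fin d → ℤ),
      mulVecE (B.map ((↑) : ℤ → ℝ)) (intVec p) = intVec (B.mulVec p) := by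
    intro B p
    ext i
    show (B.map ((↑) : ℤ → ℝ)).mulVec (intVec p) i = ((B.mulVec p i : ℤ) : ℝ)
    simp only [Matrix.mulVec, dotProduct, Matrix.map_apply, intVec]
    push_cast
    rfl
  -- linearity of mulVecE
  have hlin : ∀ (B : Matrix (Fin d) (Fin d) ℝ) (a b c : EuclideanSpace ℝ (Fin d)),
      mulVecE B (a - b - c) = mulVecE B a - mulVecE B b - mulVecE B c := by
    intro B a b c
    ext i
    simp [mulVecE, Matrix.mulVec_sub]
  have hmulmul : ∀ (B C : Matrix (Fin d) (Fin d) ℝ) (a : EuclideanSpace ℝ (Fin d)),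
      mulVecE (B * C) a = mulVecE B (mulVecE C a) := by
    intro B C a
    show WithLp.toLp 2 ((B * C).mulVec a) = WithLp.toLp 2 (B.mulVec (C.mulVec a))
    rw [Matrix.mulVec_mulVec]
  -- one-step conjugacy relation
  have claim1 : ∀ (p : Fin d → ℤ) (y : EuclideanSpace ℝ (Fin d)),
      mulVecE Ar (g p y) = g (A.mulVec p) (F y) := by
    intro p y
    rw [hg]
    show mulVecE Ar (H (y + intVec p) - H y - intVec p)
      = H (F y + intVec (A.mulVec p)) - H (F y) - intVec (A.mulVec p)
    rw [hlin, hconj, hconj, hint A p]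
    have : F (y + intVec p) = F y + intVec (A.mulVec p) := by
      rw [hlift, hint A p]
    rw [this]
  -- iterated relation
  have claimk : ∀ (k : ℕ) (p : Fin d → ℤ) (y : EuclideanSpace ℝ (Fin d)),
      mulVecE (Ar ^ k) (g p y) = g ((A ^ k).mulVec p) (F^[k] y) := by
    intro k
    induction k with
    | zero =>
      intro p y
      show mulVecE 1 (g p y) = g ((1 : Matrix (Fin d) (Fin d) ℤ).mulVec p) y
      rw [Matrix.one_mulVec]
      show WithLp.toLp 2 ((1 : Matrix (Fin d) (Fin d) ℝ).mulVec (g p y)) = g p y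
      rw [Matrix.one_mulVec]
    | succ k ih =>
      intro p y
      rw [pow_succ', hmulmul, ih p y, claim1, Function.iterate_succ_apply',
        Matrix.mulVec_mulVec, ← pow_succ']
  -- uniform bound
  have hC₀0 : (0:ℝ) ≤ C₀ := le_trans (norm_nonneg _) (hC₀ 0)
  have claim2 : ∀ (p : Fin d → ℤ) (y : EuclideanSpace ℝ (Fin d)), ‖g p y‖ ≤ 2 * C₀ := by
    intro p y
    rw [hg]
    have heq : H (y + intVec p) - H y - intVec p
        = (H (y + intVec p) - (y + intVec p)) - (H y - y) := by abel
    show ‖H (y + intVec p) - H y - intVec p‖ ≤ 2 * C₀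
    rw [heq]
    calc ‖(H (y + intVec p) - (y + intVec p)) - (H y - y)‖
        ≤ ‖H (y + intVec p) - (y + intVec p)‖ + ‖H y - y‖ := norm_sub_le _ _
      _ ≤ C₀ + C₀ := add_le_add (hC₀ _) (hC₀ _)
      _ = 2 * C₀ := by ring
  -- choose preimage and the integer vector n'
  obtain ⟨n', hn'⟩ := hn m hm le_rfl
  obtain ⟨y, hy⟩ := (hFbij.iterate m).2 x
  set v : EuclideanSpace ℝ (Fin d) := g n' y with hv
  have hkey : H (x + intVec n) - H x - intVec n = mulVecE (Ar ^ m) v := by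
    rw [hv, claimk m n' y, hn', hy]
  -- bounded orbit
  have horbit : ∀ k : ℕ, ‖mulVecE (Ar ^ k) v‖ ≤ 2 * C₀ := by
    intro k
    rw [hv, claimk k n' y]
    exact claim2 _ _
  have htend := bridge A hhyp v (2 * C₀) horbit
  have hest := hstab v htend m
  have hvle : ‖v‖ ≤ 2 * C₀ := claim2 n' y
  rw [hkey]
  calc ‖mulVecE (Ar ^ m) v‖ ≤ C₁ * lam ^ m * ‖v‖ := hest
    _ ≤ C₁ * lam ^ m * (2 * C₀) := by
        apply mul_le_mul_of_nonneg_left hvle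
        exact mul_nonneg hC₁.le (pow_nonneg hlam.1.le m)
    _ = 2 * C₀ * C₁ * lam ^ m := by ring
end

section
/- Let A ∈ M_d(ℤ) ∩ GL_d(ℝ) be a hyperbolic integer matrix, let F : ℝ^d → ℝ^d be a bijection that is a lift of a torus map with linearization A, and let H : ℝ^d → ℝ^d be a bijection with A ∘ H = H ∘ F, sup_{x∈ℝ^d} ‖H(x) − x‖ < ∞, and H^{-1} uniformly continuous. Then there exists a sequence ε_m → 0 such that for every m ≥ 1, every x ∈ ℝ^d, and every n ∈ ℤ^d with A^{-i} n ∈ ℤ^d for all 1 ≤ i ≤ m, one has ‖H^{-1}(x + n) − H^{-1}(x) − n‖ ≤ ε_m. Equivalently: for every ε > 0 there exists M ∈ ℕ such that the above difference has norm at most ε whenever m ≥ M. -/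
open Polynomial Matrix

private lemma vanish_of_geom {d : ℕ} (v : Fin d → ℂ) (c ρ : ℝ) (hρ0 : 0 ≤ ρ) (hρ1 : ρ < 1)
    (h : ∀ k : ℕ, ‖v‖ ≤ c * ρ ^ k) : v = 0 := by
  have hlim : Filter.Tendsto (fun k : ℕ => c * ρ ^ k) Filter.atTop (nhds 0) := by
    simpa using (tendsto_pow_atTop_nhds_zero_of_lt_one hρ0 hρ1).const_mul c
  have : ‖v‖ ≤ 0 :=
    le_of_tendsto_of_tendsto' tendsto_const_nhds hlim h
  simpa using norm_le_zero_iff.mp this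

private lemma list_prod_mulVec_zero {d : ℕ} (B : Matrix (Fin d) (Fin d) ℂ) (hdet : B.det ≠ 0)
    (w : Fin d → ℂ) (M : ℝ)
    (hM : ∀ k : ℕ, ‖(B ^ k).mulVec w‖ ≤ M ∧ ‖((B ^ k)⁻¹).mulVec w‖ ≤ M) :
    ∀ L : List ℂ, (∀ μ ∈ L, μ ≠ 0 ∧ ‖μ‖ ≠ 1) →
      ((L.map (fun μ => B - μ • 1)).prod).mulVec w = 0 → w = 0 := by
  intro L
  induction L with
  | nil => intro _ h; simpa [Matrix.one_mulVec] using h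
  | cons μ L' IH =>
    intro hL h
    obtain ⟨hμ0, hμ1⟩ := hL μ List.mem_cons_self
    set P := (L'.map (fun μ => B - μ • 1)).prod with hP
    set v := P.mulVec w with hv
    have hcommB : ∀ k : ℕ, Commute (B ^ k) P := by
      intro k
      refine (Commute.list_prod_right _ _ ?_).pow_left k
      intro x hx
      simp only [List.mem_map] at hx
      obtain ⟨a, _, rfl⟩ := hx
      exact (Commute.refl B).sub_right ((Commute.one_right B).smul_right a)
    have hdetpow : ∀ k : ℕ, IsUnit ((B ^ k).det) := by
      intro k
      rw [Matrix.det_pow]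
      exact (pow_ne_zero k hdet).isUnit
    have hcommBinv : ∀ k : ℕ, (B ^ k)⁻¹ * P = P * (B ^ k)⁻¹ := by
      intro k
      calc (B ^ k)⁻¹ * P
          = (B ^ k)⁻¹ * P * (B ^ k * (B ^ k)⁻¹) := by
            rw [Matrix.mul_nonsing_inv _ (hdetpow k), mul_one]
        _ = (B ^ k)⁻¹ * (B ^ k * P) * (B ^ k)⁻¹ := by
            rw [(hcommB k).eq]; noncomm_ring
        _ = P * (B ^ k)⁻¹ := by
            rw [← mul_assoc, Matrix.nonsing_inv_mul _ (hdetpow k), one_mul]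
    have heig : B.mulVec v = μ • v := by
      have h0 : ((B - μ • 1) * P).mulVec w = 0 := by
        simpa [List.map_cons, List.prod_cons] using h
      have h1 : (B - μ • 1).mulVec v = 0 := by
        rw [hv, Matrix.mulVec_mulVec]; exact h0
      have h2 := Matrix.sub_mulVec B (μ • 1) v
      rw [h1] at h2
      have h3 : (μ • (1 : Matrix (Fin d) (Fin d) ℂ)).mulVec v = μ • v := by
        rw [Matrix.smul_mulVec, Matrix.one_mulVec]
      have := sub_eq_zero.mp h2.symm
      rw [h3] at this; exact this
    have hpow : ∀ k : ℕ, (B ^ k).mulVec v = μ ^ k • v := by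
      intro k
      induction k with
      | zero => simp [Matrix.one_mulVec]
      | succ k ih =>
        rw [pow_succ', ← Matrix.mulVec_mulVec, ih, Matrix.mulVec_smul, heig,
          smul_smul, pow_succ', mul_comm]
    have hpowinv : ∀ k : ℕ, ((B ^ k)⁻¹).mulVec v = (μ ^ k)⁻¹ • v := by
      intro k
      have h1 : ((B ^ k)⁻¹).mulVec ((B ^ k).mulVec v) = v := by
        rw [Matrix.mulVec_mulVec, Matrix.nonsing_inv_mul _ (hdetpow k), Matrix.one_mulVec]
      rw [hpow k, Matrix.mulVec_smul] at h1
      have hμk : (μ : ℂ) ^ k ≠ 0 := pow_ne_zero _ hμ0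
      calc ((B ^ k)⁻¹).mulVec v = (μ ^ k)⁻¹ • (μ ^ k • ((B ^ k)⁻¹).mulVec v) := by
            rw [smul_smul, inv_mul_cancel₀ hμk, one_smul]
        _ = (μ ^ k)⁻¹ • v := by rw [h1]
    obtain ⟨c, hc0, hc⟩ : ∃ c : ℝ, 0 ≤ c ∧ ∀ u : Fin d → ℂ, ‖P.mulVec u‖ ≤ c * ‖u‖ := by
      let f := LinearMap.toContinuousLinearMap (Matrix.mulVecLin P)
      exact ⟨‖f‖, norm_nonneg f, fun u => f.le_opNorm u⟩
    have horb : ∀ k : ℕ, ‖(B ^ k).mulVec v‖ ≤ c * M ∧ ‖((B ^ k)⁻¹).mulVec v‖ ≤ c * M := by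
      intro k
      constructor
      · have : (B ^ k).mulVec v = P.mulVec ((B ^ k).mulVec w) := by
          rw [hv, Matrix.mulVec_mulVec, Matrix.mulVec_mulVec, (hcommB k).eq]
        rw [this]
        exact (hc _).trans (mul_le_mul_of_nonneg_left (hM k).1 hc0)
      · have : ((B ^ k)⁻¹).mulVec v = P.mulVec (((B ^ k)⁻¹).mulVec w) := by
          rw [hv, Matrix.mulVec_mulVec, Matrix.mulVec_mulVec, hcommBinv k]
        rw [this]
        exact (hc _).trans (mul_le_mul_of_nonneg_left (hM k).2 hc0)
    have hv0 : v = 0 := by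
      rcases lt_or_gt_of_ne hμ1 with hlt | hgt
      · refine vanish_of_geom v (c * M) ‖μ‖ (norm_nonneg μ) hlt (fun k => ?_)
        have := (horb k).2
        rw [hpowinv k] at this
        have hn : ‖(μ ^ k)⁻¹ • v‖ = (‖μ‖ ^ k)⁻¹ * ‖v‖ := by
          rw [norm_smul, norm_inv, norm_pow]
        rw [hn] at this
        have hμk : (0:ℝ) < ‖μ‖ ^ k ∨ ‖μ‖ ^ k = 0 := by
          rcases eq_or_lt_of_le (pow_nonneg (norm_nonneg μ) k) with h' | h'
          · exact Or.inr h'.symm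
          · exact Or.inl h'
        rcases hμk with h' | h'
        · have h2 : ‖v‖ = ‖μ‖ ^ k * ((‖μ‖ ^ k)⁻¹ * ‖v‖) := by
            rw [← mul_assoc, mul_inv_cancel₀ (ne_of_gt h'), one_mul]
          rw [h2, mul_comm ((c : ℝ) * M) (‖μ‖ ^ k)]
          exact mul_le_mul_of_nonneg_left this (le_of_lt h')
        · exfalso
          have : ‖μ‖ = 0 := by
            by_contra hne
            exact (pow_ne_zero k hne) h'
          exact hμ0 (norm_eq_zero.mp this)
      · refine vanish_of_geom v (c * M) ‖μ‖⁻¹ (inv_nonneg.mpr (norm_nonneg μ))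
          (inv_lt_one_of_one_lt₀ hgt) (fun k => ?_)
        have := (horb k).1
        rw [hpow k] at this
        rw [norm_smul, norm_pow] at this
        have hpos : (0:ℝ) < ‖μ‖ ^ k := pow_pos (lt_trans one_pos hgt) k
        have h2 : ‖v‖ = (‖μ‖⁻¹) ^ k * (‖μ‖ ^ k * ‖v‖) := by
          rw [← mul_assoc, inv_pow, inv_mul_cancel₀ (ne_of_gt hpos), one_mul]
        rw [h2, mul_comm ((c : ℝ) * M) ((‖μ‖⁻¹) ^ k)]
        exact mul_le_mul_of_nonneg_left this
          (pow_nonneg (inv_nonneg.mpr (norm_nonneg μ)) k)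
    exact IH (fun μ' hμ' => hL μ' (List.mem_cons_of_mem _ hμ')) hv0

private lemma boundedOrbit_zero {d : ℕ} (B : Matrix (Fin d) (Fin d) ℂ) (hdet : B.det ≠ 0)
    (hroots : ∀ μ : ℂ, B.charpoly.IsRoot μ → ‖μ‖ ≠ 1)
    (w : Fin d → ℂ) (M : ℝ)
    (hM : ∀ k : ℕ, ‖(B ^ k).mulVec w‖ ≤ M ∧ ‖((B ^ k)⁻¹).mulVec w‖ ≤ M) : w = 0 := by
  have hmonic := B.charpoly_monic
  have hsplit : B.charpoly.Splits := IsAlgClosed.splits _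
  have hcard := (Polynomial.splits_iff_card_roots).mp hsplit
  have hfac := Polynomial.prod_multiset_X_sub_C_of_monic_of_roots_card_eq hmonic hcard
  have hLroot : ∀ μ ∈ B.charpoly.roots.toList, μ ≠ 0 ∧ ‖μ‖ ≠ 1 := by
    intro μ hμ
    have hmem : μ ∈ B.charpoly.roots := by rwa [← Multiset.mem_toList]
    have hroot := Polynomial.isRoot_of_mem_roots hmem
    refine ⟨?_, hroots μ hroot⟩
    rintro rfl
    have h0 : B.charpoly.coeff 0 = 0 := by
      rw [Polynomial.coeff_zero_eq_eval_zero]; exact hroot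
    have := Matrix.det_eq_sign_charpoly_coeff B
    rw [h0, mul_zero] at this
    exact hdet this
  rw [← Multiset.coe_toList B.charpoly.roots, Multiset.map_coe,
    Multiset.prod_coe] at hfac
  have hCH : (Polynomial.aeval B) B.charpoly = 0 := B.aeval_self_charpoly
  rw [← hfac, map_list_prod (Polynomial.aeval B), List.map_map] at hCH
  have hprod : ((B.charpoly.roots.toList.map (fun μ => B - μ • 1)).prod) = 0 := by
    rw [← hCH]
    congr 2
    ext a
    simp [Function.comp, Algebra.algebraMap_eq_smul_one]
  exact list_prod_mulVec_zero B hdet w M hM _ hLroot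
    (by rw [hprod, Matrix.zero_mulVec])

private lemma euclid_coord_le {d : ℕ} (v : EuclideanSpace ℝ (Fin d)) (j : Fin d) :
    |v j| ≤ ‖v‖ := by
  rw [EuclideanSpace.norm_eq]
  calc |v j| = Real.sqrt (‖v j‖ ^ 2) := by
        rw [Real.sqrt_sq_eq_abs, Real.norm_eq_abs, abs_abs]
    _ ≤ Real.sqrt (∑ i, ‖v i‖ ^ 2) :=
        Real.sqrt_le_sqrt (Finset.single_le_sum (f := fun i => ‖v i‖ ^ 2)
          (fun i _ => sq_nonneg _) (Finset.mem_univ j))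

private lemma mulVecE_cast {d : ℕ} (P : Matrix (Fin d) (Fin d) ℤ) (k : Fin d → ℤ) :
    mulVecE (P.map ((↑) : ℤ → ℝ)) (intVec k) = intVec (P.mulVec k) := by
  ext j
  show ((P.map ((↑) : ℤ → ℝ)).mulVec (intVec k).ofLp) j = ((P.mulVec k) j : ℝ)
  simp only [Matrix.mulVec, dotProduct, Matrix.map_apply, intVec]
  push_cast
  ring

private lemma map_pow_int {d : ℕ} (A : Matrix (Fin d) (Fin d) ℤ) (i : ℕ) :
    (A.map ((↑) : ℤ → ℝ)) ^ i = (A ^ i).map ((↑) : ℤ → ℝ) := by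
  have : A.map ((↑) : ℤ → ℝ) = (Int.castRingHom ℝ).mapMatrix A := rfl
  rw [this, ← map_pow]
  rfl

private lemma map_pow_intC {d : ℕ} (A : Matrix (Fin d) (Fin d) ℤ) (i : ℕ) :
    (A.map ((↑) : ℤ → ℂ)) ^ i = (A ^ i).map ((↑) : ℤ → ℂ) := by
  have : A.map ((↑) : ℤ → ℂ) = (Int.castRingHom ℂ).mapMatrix A := rfl
  rw [this, ← map_pow]
  rfl

private lemma map_RC {d : ℕ} (A : Matrix (Fin d) (Fin d) ℤ) :
    ∀ i : ℕ, (A.map ((↑) : ℤ → ℂ)) ^ i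
      = ((A.map ((↑) : ℤ → ℝ)) ^ i).map Complex.ofReal := by
  intro i
  rw [map_pow_intC, map_pow_int, Matrix.map_map]
  congr 1

private lemma mulVec_castC {d : ℕ} (R : Matrix (Fin d) (Fin d) ℝ) (u : Fin d → ℝ) :
    (R.map (Complex.ofReal)).mulVec (fun j => ((u j : ℝ) : ℂ))
      = fun j => (((R.mulVec u) j : ℝ) : ℂ) := by
  funext j
  simp only [Matrix.mulVec, dotProduct, Matrix.map_apply]
  push_cast
  ring

private lemma inv_map_C {d : ℕ} (R : Matrix (Fin d) (Fin d) ℝ) (h : IsUnit R.det) :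
    (R.map (Complex.ofReal))⁻¹ = R⁻¹.map (Complex.ofReal) := by
  apply Matrix.inv_eq_right_inv
  have hco : (Complex.ofReal : ℝ → ℂ) = ⇑Complex.ofRealHom := rfl
  rw [hco, ← Matrix.map_mul, Matrix.mul_nonsing_inv _ h,
    Matrix.map_one _ (map_zero _) (map_one _)]

private lemma mulVecE_cont {d : ℕ} (M : Matrix (Fin d) (Fin d) ℝ) :
    Continuous (fun w : EuclideanSpace ℝ (Fin d) => mulVecE M w) := by
  let L : EuclideanSpace ℝ (Fin d) →ₗ[ℝ] EuclideanSpace ℝ (Fin d) :=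
    { toFun := mulVecE M,
      map_add' := fun a b => by ext j; simp [mulVecE, Matrix.mulVec_add],
      map_smul' := fun c a => by ext j; simp [mulVecE, Matrix.mulVec_smul] }
  exact L.continuous_of_finiteDimensional

private lemma mulVecE_sub3 {d : ℕ} (M : Matrix (Fin d) (Fin d) ℝ)
    (a b c : EuclideanSpace ℝ (Fin d)) :
    mulVecE M (a - b - c) = mulVecE M a - mulVecE M b - mulVecE M c := by
  ext j; simp [mulVecE, Matrix.mulVec_sub]

private lemma mulVecE_one {d : ℕ} (x : EuclideanSpace ℝ (Fin d)) : mulVecE 1 x = x := by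
  simp [mulVecE]

private lemma mulVecE_comp {d : ℕ} (M N : Matrix (Fin d) (Fin d) ℝ)
    (x : EuclideanSpace ℝ (Fin d)) :
    mulVecE M (mulVecE N x) = mulVecE (M * N) x := by
  simp [mulVecE, Matrix.mulVec_mulVec]

private lemma mulVecE_zero {d : ℕ} (M : Matrix (Fin d) (Fin d) ℝ) :
    mulVecE M (0 : EuclideanSpace ℝ (Fin d)) = 0 := by
  simp [mulVecE]


/-- Let `A ∈ M_d(ℤ) ∩ GL_d(ℝ)` be hyperbolic, `F` a bijective lift of a
torus map with linearization `A`, and `H` a bijection (with inverse `G = H⁻¹`) such that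
`A ∘ H = H ∘ F`, `sup ‖H - id‖ < ∞` and `H⁻¹` uniformly continuous. Then there is a
sequence `ε_m → 0` such that for every `m ≥ 1`, every `x ∈ ℝ^d`, and every `n ∈ ℤ^d` with
`A^(-i) n ∈ ℤ^d` for all `1 ≤ i ≤ m`, one has `‖H⁻¹(x+n) - H⁻¹(x) - n‖ ≤ ε_m`. -/
theorem stmt7 (d : ℕ) (A : Matrix (Fin d) (Fin d) ℤ)
    (hdet : (A.map ((↑) : ℤ → ℝ)).det ≠ 0)
    (hhyp : ∀ μ : ℂ, (Matrix.charpoly (A.map ((↑) : ℤ → ℂ))).IsRoot μ → ‖μ‖ ≠ 1)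
    (F H G : EuclideanSpace ℝ (Fin d) → EuclideanSpace ℝ (Fin d))
    (hFbij : Function.Bijective F)
    (hinv₁ : Function.LeftInverse G H) (hinv₂ : Function.RightInverse G H)
    (hlift : ∀ (x : EuclideanSpace ℝ (Fin d)) (n : Fin d → ℤ),
      F (x + intVec n) = F x + mulVecE (A.map ((↑) : ℤ → ℝ)) (intVec n))
    (hconj : ∀ x : EuclideanSpace ℝ (Fin d),
      mulVecE (A.map ((↑) : ℤ → ℝ)) (H x) = H (F x))
    (hbdd : ∃ C : ℝ, ∀ x : EuclideanSpace ℝ (Fin d), ‖H x - x‖ ≤ C)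
    (hG : UniformContinuous G) :
    ∃ ε : ℕ → ℝ, Filter.Tendsto ε Filter.atTop (nhds 0) ∧
      ∀ m : ℕ, 1 ≤ m → ∀ (x : EuclideanSpace ℝ (Fin d)) (n : Fin d → ℤ),
        (∀ i : ℕ, 1 ≤ i → i ≤ m → ∃ n' : Fin d → ℤ, (A ^ i).mulVec n' = n) →
        ‖G (x + intVec n) - G x - intVec n‖ ≤ ε m := by
    classical
  obtain ⟨C, hC⟩ := hbdd
  have hC0 : (0:ℝ) ≤ C := le_trans (norm_nonneg _) (hC 0)
  set D : ℝ := 2 * C with hDdef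
  have hD0 : (0:ℝ) ≤ D := by positivity
  have hdetpow : ∀ i : ℕ, IsUnit (((A.map ((↑) : ℤ → ℝ)) ^ i).det) := by
    intro i; rw [Matrix.det_pow]; exact (pow_ne_zero i hdet).isUnit
  -- iterated lift property
  have hliftIter : ∀ (i : ℕ) (z : EuclideanSpace ℝ (Fin d)) (k : Fin d → ℤ),
      F^[i] (z + intVec k) = F^[i] z + intVec ((A ^ i).mulVec k) := by
    intro i
    induction i with
    | zero =>
      intro z k
      simp [Function.iterate_zero, pow_zero, Matrix.one_mulVec]
    | succ i ih =>
      intro z k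
      rw [Function.iterate_succ_apply', Function.iterate_succ_apply', ih, hlift,
        mulVecE_cast, Matrix.mulVec_mulVec, ← pow_succ']
  -- iterated conjugacy
  have hconjIter : ∀ (i : ℕ) (z : EuclideanSpace ℝ (Fin d)),
      mulVecE ((A.map ((↑) : ℤ → ℝ)) ^ i) (H z) = H (F^[i] z) := by
    intro i
    induction i with
    | zero =>
      intro z
      rw [pow_zero, Function.iterate_zero]
      exact mulVecE_one (H z)
    | succ i ih =>
      intro z
      rw [pow_succ', ← mulVecE_comp, ih, hconj, Function.iterate_succ_apply']
  -- key identity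
  have hkey : ∀ (i : ℕ) (z : EuclideanSpace ℝ (Fin d)) (k : Fin d → ℤ),
      mulVecE ((A.map ((↑) : ℤ → ℝ)) ^ i) (H (z + intVec k) - H z - intVec k)
        = H (F^[i] z + intVec ((A ^ i).mulVec k)) - H (F^[i] z)
          - intVec ((A ^ i).mulVec k) := by
    intro i z k
    rw [mulVecE_sub3, hconjIter i (z + intVec k), hconjIter i z, hliftIter,
      map_pow_int A i, mulVecE_cast]
  -- uniform bound
  have hbound : ∀ (z : EuclideanSpace ℝ (Fin d)) (k : Fin d → ℤ),
      ‖H (z + intVec k) - H z - intVec k‖ ≤ D := by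
    intro z k
    have hrw : H (z + intVec k) - H z - intVec k
        = (H (z + intVec k) - (z + intVec k)) - (H z - z) := by abel
    rw [hrw, hDdef, two_mul]
    exact le_trans (norm_sub_le _ _) (add_le_add (hC _) (hC _))
  -- inverse of F
  let e : EuclideanSpace ℝ (Fin d) ≃ EuclideanSpace ℝ (Fin d) := Equiv.ofBijective F hFbij
  have hFF' : ∀ (i : ℕ) (z : EuclideanSpace ℝ (Fin d)), F^[i] ((⇑e.symm)^[i] z) = z := by
    intro i z
    have h1 : Function.LeftInverse (⇑e)^[i] ((⇑e.symm)^[i]) :=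
      Function.LeftInverse.iterate e.right_inv i
    exact h1 z
  -- the compact sets
  set K : ℕ → Set (EuclideanSpace ℝ (Fin d)) := fun m =>
    {w | (∀ i : ℕ, ‖mulVecE ((A.map ((↑) : ℤ → ℝ)) ^ i) w‖ ≤ D) ∧
      ∀ i : ℕ, i ≤ m → ‖mulVecE (((A.map ((↑) : ℤ → ℝ)) ^ i)⁻¹) w‖ ≤ D} with hKdef
  have hKmono : ∀ {a b : ℕ}, a ≤ b → K b ⊆ K a := by
    intro a b hab w hw
    exact ⟨hw.1, fun i hi => hw.2 i (hi.trans hab)⟩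
  have hK0 : ∀ m, (0 : EuclideanSpace ℝ (Fin d)) ∈ K m := by
    intro m
    constructor
    · intro i; rw [mulVecE_zero]; simpa using hD0
    · intro i _; rw [mulVecE_zero]; simpa using hD0
  have hKnorm : ∀ m, ∀ w ∈ K m, ‖w‖ ≤ D := by
    intro m w hw
    have := hw.1 0
    rwa [pow_zero, mulVecE_one] at this
  have hKcl : ∀ m, IsClosed (K m) := by
    intro m
    have h1 : ∀ M : Matrix (Fin d) (Fin d) ℝ,
        IsClosed {w : EuclideanSpace ℝ (Fin d) | ‖mulVecE M w‖ ≤ D} :=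
      fun M => isClosed_le ((mulVecE_cont M).norm) continuous_const
    have : K m = (⋂ i : ℕ,
          {w : EuclideanSpace ℝ (Fin d) | ‖mulVecE ((A.map ((↑) : ℤ → ℝ)) ^ i) w‖ ≤ D})
        ∩ ⋂ i : ℕ, ⋂ (_ : i ≤ m),
          {w : EuclideanSpace ℝ (Fin d) | ‖mulVecE (((A.map ((↑) : ℤ → ℝ)) ^ i)⁻¹) w‖ ≤ D} := by
      ext w
      simp only [hKdef, Set.mem_setOf_eq, Set.mem_inter_iff, Set.mem_iInter]
    rw [this]
    exact (isClosed_iInter fun i => h1 _).inter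
      (isClosed_iInter fun i => isClosed_iInter fun _ => h1 _)
  have hKcomp : ∀ m, IsCompact (K m) := by
    intro m
    refine (isCompact_closedBall (0 : EuclideanSpace ℝ (Fin d)) D).of_isClosed_subset
      (hKcl m) ?_
    intro w hw
    rw [Metric.mem_closedBall, dist_zero_right]
    exact hKnorm m w hw
  -- the intersection is {0}
  have hKinter : ∀ w : EuclideanSpace ℝ (Fin d), (∀ m, w ∈ K m) → w = 0 := by
    intro w hw
    have hmapdetR : ((A.det : ℤ) : ℝ) = (A.map ((↑) : ℤ → ℝ)).det := by
      simpa using RingHom.map_det (Int.castRingHom ℝ) A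
    have hmapdetC : ((A.det : ℤ) : ℂ) = (A.map ((↑) : ℤ → ℂ)).det := by
      simpa using RingHom.map_det (Int.castRingHom ℂ) A
    have hdetA : A.det ≠ 0 := by
      intro h0
      apply hdet
      rw [← hmapdetR, h0, Int.cast_zero]
    have hdetB : (A.map ((↑) : ℤ → ℂ)).det ≠ 0 := by
      rw [← hmapdetC]
      exact_mod_cast hdetA
    have hball : ∀ i : ℕ, ‖mulVecE ((A.map ((↑) : ℤ → ℝ)) ^ i) w‖ ≤ D
        ∧ ‖mulVecE (((A.map ((↑) : ℤ → ℝ)) ^ i)⁻¹) w‖ ≤ D := by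
      intro i
      exact ⟨(hw i).1 i, (hw i).2 i le_rfl⟩
    have hforward : ∀ k : ℕ,
        ((A.map ((↑) : ℤ → ℂ)) ^ k).mulVec (fun j => ((w j : ℝ) : ℂ))
          = fun j => (((mulVecE ((A.map ((↑) : ℤ → ℝ)) ^ k) w) j : ℝ) : ℂ) := by
      intro k
      rw [map_RC A k, mulVec_castC]
      rfl
    have hbackward : ∀ k : ℕ,
        (((A.map ((↑) : ℤ → ℂ)) ^ k)⁻¹).mulVec (fun j => ((w j : ℝ) : ℂ))
          = fun j => (((mulVecE (((A.map ((↑) : ℤ → ℝ)) ^ k)⁻¹) w) j : ℝ) : ℂ) := by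
      intro k
      rw [map_RC A k, inv_map_C _ (hdetpow k), mulVec_castC]
      rfl
    have hwc : (fun j => ((w j : ℝ) : ℂ)) = 0 := by
      apply boundedOrbit_zero (A.map ((↑) : ℤ → ℂ)) hdetB hhyp _ D
      intro k
      constructor
      · rw [hforward k]
        rw [pi_norm_le_iff_of_nonneg hD0]
        intro j
        rw [Complex.norm_real, Real.norm_eq_abs]
        exact le_trans (euclid_coord_le _ j) (hball k).1
      · rw [hbackward k]
        rw [pi_norm_le_iff_of_nonneg hD0]
        intro j
        rw [Complex.norm_real, Real.norm_eq_abs]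
        exact le_trans (euclid_coord_le _ j) (hball k).2
    ext j
    have h0j := congrFun hwc j
    rw [Pi.zero_apply] at h0j
    show w j = (0 : ℝ)
    exact Complex.ofReal_eq_zero.mp h0j
  -- membership of the basic quantity in K m
  have hmem : ∀ m : ℕ, ∀ (x : EuclideanSpace ℝ (Fin d)) (n : Fin d → ℤ),
      (∀ i : ℕ, 1 ≤ i → i ≤ m → ∃ n' : Fin d → ℤ, (A ^ i).mulVec n' = n) →
      (H (G x + intVec n) - H (G x) - intVec n) ∈ K m := by
    intro m x n hn
    constructor
    · intro i
      rw [hkey i (G x) n]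
      exact hbound _ _
    · intro i him
      rcases Nat.eq_zero_or_pos i with rfl | hi
      · have h1 : ((A.map ((↑) : ℤ → ℝ)) ^ 0)⁻¹ = 1 := by
          rw [pow_zero]
          exact Matrix.inv_eq_right_inv (by rw [one_mul])
        rw [h1, mulVecE_one]
        exact hbound _ _
      · obtain ⟨n', hn'⟩ := hn i hi him
        set z₀ := (⇑e.symm)^[i] (G x) with hz₀
        have hkey' := hkey i z₀ n'
        rw [hFF' i (G x), hn'] at hkey'
        have h2 : mulVecE (((A.map ((↑) : ℤ → ℝ)) ^ i)⁻¹)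
              (H (G x + intVec n) - H (G x) - intVec n)
            = H (z₀ + intVec n') - H z₀ - intVec n' := by
          rw [← hkey', mulVecE_comp, Matrix.nonsing_inv_mul _ (hdetpow i), mulVecE_one]
        rw [h2]
        exact hbound _ _
    -- suprema over the compact sets
  have hsbdd : ∀ m, BddAbove ((fun w : EuclideanSpace ℝ (Fin d) => ‖w‖) '' K m) := by
    intro m
    exact ⟨D, by rintro r ⟨w, hw, rfl⟩; exact hKnorm m w hw⟩
  have hsne : ∀ m, ((fun w : EuclideanSpace ℝ (Fin d) => ‖w‖) '' K m).Nonempty :=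
    fun m => ⟨‖(0 : EuclideanSpace ℝ (Fin d))‖, 0, hK0 m, rfl⟩
  set s : ℕ → ℝ :=
    fun m => sSup ((fun w : EuclideanSpace ℝ (Fin d) => ‖w‖) '' K m) with hsdef
  have hs0 : ∀ m, 0 ≤ s m := by
    intro m
    have h01 : (0:ℝ) ∈ (fun w : EuclideanSpace ℝ (Fin d) => ‖w‖) '' K m :=
      ⟨0, hK0 m, norm_zero⟩
    exact le_csSup (hsbdd m) h01
  have hsle : ∀ m (w : EuclideanSpace ℝ (Fin d)), w ∈ K m → ‖w‖ ≤ s m :=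
    fun m w hw => le_csSup (hsbdd m) ⟨w, hw, rfl⟩
  have hstend : Filter.Tendsto s Filter.atTop (nhds 0) := by
    rw [Metric.tendsto_atTop]
    intro η hη
    have hTn : ∃ N : ℕ, ∀ w ∈ K N, ‖w‖ < η/2 := by
      by_contra hcon
      push_neg at hcon
      set T : ℕ → Set (EuclideanSpace ℝ (Fin d)) :=
        fun m => K m ∩ {w | η/2 ≤ ‖w‖} with hT
      have hTclosed : ∀ m, IsClosed (T m) :=
        fun m => (hKcl m).inter (isClosed_le continuous_const continuous_norm)
      have hTne : ∀ m, (T m).Nonempty := by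
        intro m; obtain ⟨w, hw1, hw2⟩ := hcon m; exact ⟨w, hw1, hw2⟩
      have h := IsCompact.nonempty_iInter_of_sequence_nonempty_isCompact_isClosed T
        (fun m => Set.inter_subset_inter (hKmono (Nat.le_succ m)) subset_rfl)
        hTne ((hKcomp 0).of_isClosed_subset (hTclosed 0) Set.inter_subset_left)
        hTclosed
      obtain ⟨w, hwmem⟩ := h
      have hwK : ∀ m, w ∈ K m := fun m => ((Set.mem_iInter.mp hwmem) m).1
      have hw0 : w = 0 := hKinter w hwK
      have hge : η/2 ≤ ‖w‖ := ((Set.mem_iInter.mp hwmem) 0).2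
      rw [hw0, norm_zero] at hge
      linarith
    obtain ⟨N, hN⟩ := hTn
    refine ⟨N, fun m hm => ?_⟩
    have hsm : s m ≤ η/2 := by
      apply csSup_le (hsne m)
      rintro r ⟨w, hw, rfl⟩
      exact le_of_lt (hN w (hKmono hm hw))
    rw [Real.dist_eq, sub_zero, abs_of_nonneg (hs0 m)]
    linarith
  -- modulus of continuity of G
  set S : ℝ → Set ℝ := fun t =>
    (fun p : EuclideanSpace ℝ (Fin d) × EuclideanSpace ℝ (Fin d) => ‖G p.1 - G p.2‖) ''
      {p | ‖p.1 - p.2‖ ≤ t} with hSdef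
  set ω : ℝ → ℝ := fun t => sSup (S t) with hw
  have hGdiff : ∀ u v : EuclideanSpace ℝ (Fin d), ‖G u - G v‖ ≤ ‖u - v‖ + D := by
    intro u v
    have h1 : G u - G v = -(H (G u) - G u) + (u - v) + (H (G v) - G v) := by
      rw [hinv₂ u, hinv₂ v]; abel
    calc ‖G u - G v‖ = ‖-(H (G u) - G u) + (u - v) + (H (G v) - G v)‖ := by rw [h1]
      _ ≤ ‖-(H (G u) - G u) + (u - v)‖ + ‖H (G v) - G v‖ := norm_add_le _ _
      _ ≤ ‖-(H (G u) - G u)‖ + ‖u - v‖ + ‖H (G v) - G v‖ :=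
          add_le_add_left (norm_add_le _ _) _
      _ ≤ C + ‖u - v‖ + C := by
          rw [norm_neg]
          exact add_le_add (add_le_add (hC _) le_rfl) (hC _)
      _ = ‖u - v‖ + D := by rw [hDdef]; ring
  have hSbddAb : ∀ t, BddAbove (S t) := by
    intro t
    refine ⟨t + D, ?_⟩
    rintro r ⟨p, hp, rfl⟩
    exact le_trans (hGdiff p.1 p.2) (add_le_add_left hp D)
  have hSne : ∀ t, 0 ≤ t → (S t).Nonempty := by
    intro t ht
    exact ⟨‖G 0 - G 0‖, (0, 0), by simpa using ht, rfl⟩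
  have hωmem : ∀ t (u v : EuclideanSpace ℝ (Fin d)), ‖u - v‖ ≤ t → ‖G u - G v‖ ≤ ω t :=
    fun t u v h => le_csSup (hSbddAb t) ⟨(u, v), h, rfl⟩
  have hωn : ∀ t, 0 ≤ t → 0 ≤ ω t := by
    intro t ht
    have h00 : (0:ℝ) ∈ S t := ⟨(0, 0), by simpa using ht, by simp⟩
    exact le_csSup (hSbddAb t) h00
  have hωsmall : ∀ η : ℝ, 0 < η → ∃ δ : ℝ, 0 < δ ∧ ∀ t, 0 ≤ t → t < δ → ω t ≤ η := by
    intro η hη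
    obtain ⟨δ, hδ0, hδ⟩ := Metric.uniformContinuous_iff.mp hG η hη
    refine ⟨δ, hδ0, fun t ht htδ => ?_⟩
    apply csSup_le (hSne t ht)
    rintro r ⟨p, hp, rfl⟩
    have hd : dist p.1 p.2 < δ := lt_of_le_of_lt (by rw [dist_eq_norm]; exact hp) htδ
    have := hδ hd
    rw [dist_eq_norm] at this
    exact le_of_lt this
  refine ⟨fun m => ω (s m), ?_, ?_⟩
  · rw [Metric.tendsto_atTop]
    intro η hη
    obtain ⟨δ, hδ0, hδ⟩ := hωsmall (η/2) (by linarith)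
    obtain ⟨N, hN⟩ := (Metric.tendsto_atTop.mp hstend) δ hδ0
    refine ⟨N, fun m hm => ?_⟩
    have h1 : s m < δ := by
      have := hN m hm
      rwa [Real.dist_eq, sub_zero, abs_of_nonneg (hs0 m)] at this
    have h2 : ω (s m) ≤ η/2 := hδ (s m) (hs0 m) h1
    have h3 : 0 ≤ ω (s m) := hωn _ (hs0 m)
    rw [Real.dist_eq, sub_zero, abs_of_nonneg h3]
    linarith
  · intro m _ x n hn
    have hwK := hmem m x n hn
    have hno : ‖H (G x + intVec n) - H (G x) - intVec n‖ ≤ s m := hsle m _ hwK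
    have harg : ‖(x + intVec n) - H (G x + intVec n)‖ ≤ s m := by
      have hr : (x + intVec n) - H (G x + intVec n)
          = -(H (G x + intVec n) - H (G x) - intVec n) := by
        rw [hinv₂ x]; abel
      rw [hr, norm_neg]
      exact hno
    have hfin := hωmem (s m) (x + intVec n) (H (G x + intVec n)) harg
    rw [hinv₁ (G x + intVec n)] at hfin
    have hr2 : G (x + intVec n) - G x - intVec n
        = G (x + intVec n) - (G x + intVec n) := by abel
    rw [hr2]
    exact hfin
end

section
/- Let A ∈ M_d(ℤ) ∩ GL_d(ℝ) be a d×d integer matrix, invertible over ℝ, whose characteristic polynomial is irreducible over ℚ, and let V ⊆ ℝ^d be a nonzero linear subspace with A V = V. Then for every m ≥ 0 the set V + A^m ℤ^d is dense in ℝ^d. Consequently, for all x, y ∈ ℝ^d there exist points x_m ∈ x + V and n_m ∈ A^m ℤ^d (for each m ∈ ℕ) such that x_m + n_m → y as m → +∞. -/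
open Filter

open Matrix
open Polynomial
open Polynomial in
lemma vecMul_aeval_ne_zero {d : ℕ} (M : Matrix (Fin d) (Fin d) ℚ)
    (hirr : Irreducible M.charpoly) {w : Fin d → ℚ} (hw : w ≠ 0)
    {q : ℚ[X]} (hq : q ≠ 0) (hdeg : q.natDegree < d) :
    w ᵥ* (Polynomial.aeval M q) ≠ 0 := by
  intro h0
  have hpd : M.charpoly.natDegree = d := by simpa using M.charpoly_natDegree_eq_dim
  have hndvd : ¬ M.charpoly ∣ q := fun hdvd =>
    absurd (Polynomial.natDegree_le_of_dvd hdvd hq) (by omega)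
  obtain ⟨a, b, hab⟩ := (hirr.coprime_iff_not_dvd).mpr hndvd
  have h1 : (Polynomial.aeval M) (M.charpoly * a + q * b) = 1 := by
    rw [show M.charpoly * a + q * b = a * M.charpoly + b * q by ring, hab, _root_.map_one]
  have : w = 0 := by
    calc w = w ᵥ* (1 : Matrix (Fin d) (Fin d) ℚ) := (Matrix.vecMul_one w).symm
    _ = w ᵥ* ((Polynomial.aeval M) (M.charpoly * a + q * b)) := by rw [h1]
    _ = 0 := by
        rw [map_add, _root_.map_mul, _root_.map_mul, Matrix.aeval_self_charpoly, zero_mul,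
          Matrix.vecMul_add, Matrix.vecMul_zero, ← Matrix.vecMul_vecMul, h0,
          Matrix.zero_vecMul, add_zero]
  exact hw this

lemma vecMul_sum' {d : ℕ} {R : Type*} [CommRing R] (w : Fin d → R) (s : Finset (Fin d))
    (N : Fin d → Matrix (Fin d) (Fin d) R) :
    w ᵥ* (∑ j ∈ s, N j) = ∑ j ∈ s, w ᵥ* (N j) := by
  classical
  induction s using Finset.induction with
  | empty => simp [Matrix.vecMul_zero]
  | insert _ _ h ih => rw [Finset.sum_insert h, Finset.sum_insert h, Matrix.vecMul_add, ih]

lemma vecMul_smul' {d : ℕ} {R : Type*} [CommRing R] (w : Fin d → R) (a : R)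
    (N : Matrix (Fin d) (Fin d) R) : w ᵥ* (a • N) = a • (w ᵥ* N) := by
  funext i
  simp [Matrix.vecMul, dotProduct, Finset.mul_sum, mul_left_comm]

lemma stepA {d : ℕ} (A : Matrix (Fin d) (Fin d) ℤ)
    (hirr : Irreducible (Matrix.charpoly (A.map ((↑) : ℤ → ℚ))))
    (V : Submodule ℝ (EuclideanSpace ℝ (Fin d))) (hV : V ≠ ⊥)
    (hAV₁ : ∀ v ∈ V, mulVecE (A.map ((↑) : ℤ → ℝ)) v ∈ V)
    (w : Fin d → ℤ) (hw : ∀ v ∈ V, (fun i => (w i : ℝ)) ⬝ᵥ v = 0) :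
    w = 0 := by
  by_contra hw0
  set Mq : Matrix (Fin d) (Fin d) ℚ := A.map ((↑) : ℤ → ℚ) with hMq
  set Br : Matrix (Fin d) (Fin d) ℝ := A.map ((↑) : ℤ → ℝ) with hBr
  set wq : Fin d → ℚ := fun i => (w i : ℚ) with hwq
  have hwq0 : wq ≠ 0 := by
    intro h
    apply hw0; funext i
    have := congrFun h i
    simpa [hwq] using this
  set C : Matrix (Fin d) (Fin d) ℚ := Matrix.of (fun j i => (wq ᵥ* (Mq ^ (j : ℕ))) i) with hC
  have hdetC : C.det ≠ 0 := by
    intro hdet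
    obtain ⟨v, hv0, hvC⟩ := (Matrix.exists_vecMul_eq_zero_iff).mpr hdet
    obtain ⟨j0, hj0⟩ := Function.ne_iff.mp hv0
    set q : ℚ[X] := ∑ j : Fin d, Polynomial.C (v j) * X ^ (j : ℕ) with hq
    have hcoeff : ∀ j : Fin d, q.coeff (j : ℕ) = v j := by
      intro j
      rw [hq, Polynomial.finset_sum_coeff, Finset.sum_eq_single j]
      · simp [Polynomial.coeff_C_mul, Polynomial.coeff_X_pow]
      · intro b _ hb
        have h1 : ¬ ((b : ℕ) = (j : ℕ)) := fun h => hb (Fin.val_injective h)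
        have h2 : ¬ ((j : ℕ) = (b : ℕ)) := fun h => hb (Fin.val_injective h.symm)
        simp [Polynomial.coeff_C_mul, Polynomial.coeff_X_pow, h1, h2]
      · simp
    have hq0 : q ≠ 0 := by
      intro h
      apply hj0
      have := hcoeff j0
      rw [h] at this
      simpa using this.symm
    have hdlt : q.natDegree < d := by
      have hd0 : 0 < d := j0.pos
      have h1 : q.natDegree ≤ d - 1 := by
        rw [hq]
        apply Polynomial.natDegree_sum_le_of_forall_le
        intro j _
        refine le_trans (Polynomial.natDegree_mul_le) ?_
        simp only [Polynomial.natDegree_C, Polynomial.natDegree_X_pow, zero_add]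
        omega
      omega
    have hkey : wq ᵥ* (Polynomial.aeval Mq q) = 0 := by
      have haq : (Polynomial.aeval Mq q) = ∑ j : Fin d, v j • (Mq ^ (j : ℕ)) := by
        rw [hq, map_sum]
        refine Finset.sum_congr rfl fun j _ => ?_
        rw [_root_.map_mul, Polynomial.aeval_C, Polynomial.aeval_X_pow, Algebra.smul_def]
      rw [haq, vecMul_sum']
      funext i
      have : ∀ j : Fin d, (wq ᵥ* (v j • Mq ^ (j : ℕ))) i = v j * C j i := by
        intro j; rw [vecMul_smul']; simp [hC]
      calc (∑ j : Fin d, wq ᵥ* (v j • Mq ^ (j : ℕ))) i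
          = ∑ j : Fin d, v j * C j i := by
            rw [Finset.sum_apply]; exact Finset.sum_congr rfl fun j _ => this j
        _ = (v ᵥ* C) i := by simp [Matrix.vecMul, dotProduct]
        _ = 0 := by rw [hvC]; rfl
    exact vecMul_aeval_ne_zero Mq hirr hwq0 hq0 hdlt hkey
  -- transfer to ℝ
  have hMB : ∀ j : ℕ, (Mq ^ j).map ((↑) : ℚ → ℝ) = Br ^ j := by
    intro j
    have h1 : Mq.map ((↑) : ℚ → ℝ) = Br := by
      rw [hMq, hBr]
      ext i k
      simp [Matrix.map_apply]
    calc (Mq ^ j).map ((↑) : ℚ → ℝ) = (Rat.castHom ℝ).mapMatrix (Mq ^ j) := rfl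
      _ = ((Rat.castHom ℝ).mapMatrix Mq) ^ j := by rw [map_pow]
      _ = Br ^ j := by
          show (Mq.map ((↑) : ℚ → ℝ)) ^ j = Br ^ j
          rw [h1]
  set Cr : Matrix (Fin d) (Fin d) ℝ := C.map ((↑) : ℚ → ℝ) with hCr
  have hdetCr : Cr.det ≠ 0 := by
    rw [hCr]
    show ((Rat.castHom ℝ).mapMatrix C).det ≠ 0
    rw [← RingHom.map_det]
    show ¬ ((C.det : ℚ) : ℝ) = 0
    exact_mod_cast hdetC
  have hdot : ∀ (j : ℕ), ∀ v ∈ V, (fun i => (w i : ℝ)) ⬝ᵥ ((Br ^ j) *ᵥ v) = 0 := by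
    intro j
    induction j with
    | zero => intro v hv; simpa using hw v hv
    | succ j ih =>
        intro v hv
        have h1 : (Br ^ (j+1)) *ᵥ v = (Br ^ j) *ᵥ (Br *ᵥ v) := by
          rw [Matrix.mulVec_mulVec, ← pow_succ]
        rw [h1]
        exact ih (mulVecE Br v) (hAV₁ v hv)
  have hCrv : ∀ v ∈ V, Cr *ᵥ (v : EuclideanSpace ℝ (Fin d)) = 0 := by
    intro v hv
    funext j
    have hrow : (fun i => Cr j i) = (fun i => (w i : ℝ)) ᵥ* (Br ^ (j : ℕ)) := by
      funext i
      rw [← hMB]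
      show ((wq ᵥ* (Mq ^ (j : ℕ))) i : ℝ) = _
      simp [Matrix.vecMul, dotProduct, Matrix.map_apply, hwq]
    calc (Cr *ᵥ v) j = (fun i => Cr j i) ⬝ᵥ v := rfl
      _ = ((fun i => (w i : ℝ)) ᵥ* (Br ^ (j : ℕ))) ⬝ᵥ v := by rw [hrow]
      _ = (fun i => (w i : ℝ)) ⬝ᵥ ((Br ^ (j : ℕ)) *ᵥ v) := (Matrix.dotProduct_mulVec _ _ _).symm
      _ = 0 := hdot j v hv
  have hVbot : V = ⊥ := by
    rw [Submodule.eq_bot_iff]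
    intro v hv
    have h1 := hCrv v hv
    have h2 := congrArg (fun y => Cr⁻¹ *ᵥ y) h1
    simp only [Matrix.mulVec_mulVec, Matrix.nonsing_inv_mul Cr (isUnit_iff_ne_zero.mpr hdetCr),
      Matrix.one_mulVec, Matrix.mulVec_zero] at h2
    simpa using h2
  exact hV hVbot
open Filter Topology in
lemma denseKey {E : Type*} [NormedAddCommGroup E] [InnerProductSpace ℝ E]
    [FiniteDimensional ℝ E]
    (V : Submodule ℝ E) {N : ℕ} (c : Fin N → E)
    (hspan : Submodule.span ℝ (Set.range c) = ⊤)
    (hfunc : ∀ ξ : E →ₗ[ℝ] ℝ, (∀ v ∈ V, ξ v = 0) →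
      (∀ i, ∃ z : ℤ, ξ (c i) = (z : ℝ)) → ξ = 0) :
    Dense {x : E | ∃ v ∈ V, ∃ n : Fin N → ℤ, x = v + ∑ i, n i • c i} := by
  classical
  set L : AddSubgroup E := (Submodule.span ℤ (Set.range c)).toAddSubgroup with hLdef
  set H : AddSubgroup E := V.toAddSubgroup ⊔ L with hHdef
  have hset : {x : E | ∃ v ∈ V, ∃ n : Fin N → ℤ, x = v + ∑ i, n i • c i} = (H : Set E) := by
    ext x
    simp only [Set.mem_setOf_eq, SetLike.mem_coe, hHdef, AddSubgroup.mem_sup]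
    constructor
    · rintro ⟨v, hv, n, rfl⟩
      refine ⟨v, hv, ∑ i, n i • c i, ?_, rfl⟩
      show (∑ i, n i • c i) ∈ Submodule.span ℤ (Set.range c)
      exact Submodule.sum_mem _ fun i _ =>
        Submodule.smul_mem _ _ (Submodule.subset_span ⟨i, rfl⟩)
    · rintro ⟨y, hy, z, hz, rfl⟩
      obtain ⟨n, hn⟩ := (Submodule.mem_span_range_iff_exists_fun ℤ).mp hz
      exact ⟨y, hy, n, by rw [hn]⟩
  rw [hset, dense_iff_closure_eq]
  set G : AddSubgroup E := H.topologicalClosure with hGdef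
  have hGclosed : IsClosed (G : Set E) := AddSubgroup.isClosed_topologicalClosure H
  suffices hGtop : G = ⊤ by
    have h1 : closure (H : Set E) = (G : Set E) :=
      (AddSubgroup.topologicalClosure_coe (s := H)).symm
    rw [h1, hGtop]
    rfl
  have hHG : H ≤ G := AddSubgroup.le_topologicalClosure H
  -- the maximal subspace contained in G
  set W : Submodule ℝ E :=
    { carrier := {x | ∀ t : ℝ, t • x ∈ G}
      add_mem' := fun hx hy t => by
        simpa [smul_add] using G.add_mem (hx t) (hy t)
      zero_mem' := fun t => by simpa using G.zero_mem
      smul_mem' := fun s x hx t => by simpa [smul_smul] using hx (t * s) } with hWdef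
  have hWmem : ∀ x, x ∈ W ↔ ∀ t : ℝ, t • x ∈ G := fun x => Iff.rfl
  have hWG : ∀ x ∈ W, x ∈ G := fun x hx => by simpa using (hWmem x).mp hx 1
  have hVW : V ≤ W := by
    intro v hv
    rw [hWmem]
    intro t
    exact hHG (le_sup_left (a := V.toAddSubgroup) (b := L) (V.smul_mem t hv))
  have hcG : ∀ i, c i ∈ G := fun i =>
    hHG (le_sup_right (a := V.toAddSubgroup) (b := L)
      (Submodule.subset_span ⟨i, rfl⟩ : c i ∈ Submodule.span ℤ (Set.range c)))
  set K : Submodule ℝ E := Wᗮ with hKdef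
  have hKW : Kᗮ = W := Submodule.orthogonal_orthogonal W
  have hKbot : K = ⊥ := by
    by_contra hKne
    by_cases hd : ∀ ε > 0, ∃ g : E, g ∈ G ∧ g ∈ K ∧ g ≠ 0 ∧ ‖g‖ < ε
    · -- a whole line inside G : contradiction with maximality of W
      choose g hg1 hg2 hg3 hg4 using fun n : ℕ => hd (1/(n+1)) (by positivity)
      have hgn : ∀ n, ‖g n‖ ≠ 0 := fun n => norm_ne_zero_iff.mpr (hg3 n)
      set u : ℕ → E := fun n => ‖g n‖⁻¹ • g n with hu
      have humem : ∀ n, u n ∈ Metric.sphere (0:E) 1 ∩ K := fun n =>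
        ⟨by simp [hu, norm_smul, inv_mul_cancel₀ (hgn n)], K.smul_mem _ (hg2 n)⟩
      have hcpt : IsCompact (Metric.sphere (0:E) 1 ∩ K) :=
        (isCompact_sphere 0 1).inter_right (Submodule.closed_of_finiteDimensional K)
      obtain ⟨u0, hu0, φ, hφ, hconv⟩ := hcpt.tendsto_subseq humem
      have hu0n : ‖u0‖ = 1 := mem_sphere_zero_iff_norm.mp hu0.1
      have hline : ∀ t : ℝ, t • u0 ∈ G := by
        intro t
        have hgsmall : ∀ k : ℕ, ‖g (φ k)‖ ≤ 1/(k+1) := fun k =>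
          le_trans (le_of_lt (hg4 (φ k)))
            (by
              have h1 : (k : ℝ) + 1 ≤ (φ k : ℝ) + 1 := by
                have : k ≤ φ k := hφ.le_apply
                exact_mod_cast Nat.add_le_add_right this 1
              apply div_le_div_of_nonneg_left (by norm_num) (by positivity) h1)
        set a : ℕ → ℝ := fun k => (⌊t / ‖g (φ k)‖⌋ : ℝ) * ‖g (φ k)‖ with ha
        have hsmul : ∀ k : ℕ, (⌊t / ‖g (φ k)‖⌋ : ℤ) • g (φ k) = a k • u (φ k) := by
          intro k
          rw [ha, hu]
          simp only [← Int.cast_smul_eq_zsmul ℝ]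
          rw [smul_smul, mul_assoc, mul_inv_cancel₀ (hgn (φ k)), mul_one]
        have hadist : ∀ k : ℕ, |a k - t| ≤ 1/(k+1) := by
          intro k
          refine le_trans ?_ (hgsmall k)
          have hpos : 0 < ‖g (φ k)‖ := lt_of_le_of_ne (norm_nonneg _) (Ne.symm (hgn (φ k)))
          set r := t / ‖g (φ k)‖ with hr
          have h1 : a k - t = (⌊r⌋ - r) * ‖g (φ k)‖ := by
            rw [ha, hr, sub_mul, div_mul_cancel₀ _ (hgn (φ k))]
          rw [h1, abs_mul, abs_of_pos hpos]
          have h2 : |(⌊r⌋ : ℝ) - r| ≤ 1 := by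
            rw [abs_le]
            constructor
            · linarith [Int.lt_floor_add_one r]
            · linarith [Int.floor_le r]
          nlinarith [norm_nonneg (g (φ k))]
        have haten : Tendsto a atTop (𝓝 t) := by
          rw [tendsto_iff_dist_tendsto_zero]
          refine squeeze_zero (g := fun k : ℕ => 1/(k+1)) (fun k => dist_nonneg)
            (fun k => ?_) tendsto_one_div_add_atTop_nhds_zero_nat
          rw [Real.dist_eq]
          exact hadist k
        have hulim : Tendsto (fun k => u (φ k)) atTop (𝓝 u0) := hconv
        have hten : Tendsto (fun k => a k • u (φ k)) atTop (𝓝 (t • u0)) :=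
          haten.smul hulim
        refine hGclosed.mem_of_tendsto hten (Filter.Eventually.of_forall fun k => ?_)
        rw [← hsmul k]
        exact G.zsmul_mem (hg1 (φ k)) _
      have hu0W : u0 ∈ W := (hWmem u0).mpr hline
      have : u0 = 0 := by
        have h1 := (Submodule.mem_orthogonal W u0).mp hu0.2
        have h2 := h1 u0 hu0W
        exact inner_self_eq_zero.mp h2
      rw [this] at hu0n
      simp at hu0n
    · -- separated case : build a lattice and an integral functional
      push_neg at hd
      obtain ⟨ε, hε, hsep⟩ := hd
      set Pl : E →ₗ[ℝ] K := K.orthogonalProjectionOnto.toLinearMap with hPl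
      have hPlmem : ∀ x : E, x ∈ K → (Pl x : E) = x := by
        intro x hx
        have := Submodule.orthogonalProjectionOnto_mem_subspace_eq_self (K := K) ⟨x, hx⟩
        rw [hPl]
        exact congrArg (Subtype.val) this
      set Γ : Submodule ℤ K := Submodule.span ℤ (Set.range fun i => Pl (c i)) with hΓdef
      have hPcG : ∀ i, ((Pl (c i) : K) : E) ∈ G := by
        intro i
        have h1 : c i - (Pl (c i) : E) ∈ Kᗮ := K.sub_starProjection_mem_orthogonal (c i)
        have h2 : c i - (Pl (c i) : E) ∈ G := hWG _ (hKW ▸ h1)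
        have h3 : ((Pl (c i) : K) : E) = c i - (c i - (Pl (c i) : E)) := by abel
        rw [h3]
        exact G.sub_mem (hcG i) h2
      have hΓG : ∀ γ : K, γ ∈ Γ → (γ : E) ∈ G := by
        intro γ hγ
        induction hγ using Submodule.span_induction with
        | mem x hx => obtain ⟨i, rfl⟩ := hx; exact hPcG i
        | zero => simpa using G.zero_mem
        | add x y _ _ hx hy => simpa using G.add_mem hx hy
        | smul z x _ hx => simpa using G.zsmul_mem hx z
      haveI hΓdisc : DiscreteTopology Γ := by
        rw [discreteTopology_iff_isOpen_singleton_zero]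
        have : {(0 : Γ)} = (fun γ : Γ => ((γ : K) : E)) ⁻¹' Metric.ball 0 ε := by
          ext γ
          simp only [Set.mem_singleton_iff, Set.mem_preimage, Metric.mem_ball, dist_zero_right]
          constructor
          · rintro rfl; simpa using hε
          · intro hγ
            by_contra hγ0
            have h0 : ((γ : K) : E) ≠ 0 := by
              simpa using fun h => hγ0 (by
                apply Subtype.ext; apply Subtype.ext; simpa using h)
            have := hsep ((γ : K) : E) (hΓG _ γ.2) (γ : K).2 h0
            exact absurd hγ (not_lt.mpr this)
        rw [this]
        exact Metric.isOpen_ball.preimage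
          (continuous_subtype_val.comp continuous_subtype_val)
      haveI hΓlat : IsZLattice ℝ Γ := by
        constructor
        rw [hΓdef, Submodule.span_span_of_tower ℤ]
        have h1 : Set.range (fun i => Pl (c i)) = Pl '' (Set.range c) :=
          (Set.range_comp Pl c)
        rw [h1, Submodule.span_image, hspan, Submodule.map_top, LinearMap.range_eq_top]
        intro y
        exact ⟨(y : E), by
          apply Subtype.ext
          simpa using hPlmem (y : E) y.2⟩
      haveI : Module.Free ℤ Γ := ZLattice.module_free ℝ Γ
      haveI : Module.Finite ℤ Γ := ZLattice.module_finite ℝ Γ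
      set b := Module.Free.chooseBasis ℤ Γ with hb
      set bR := b.ofZLatticeBasis ℝ Γ with hbR
      haveI : Nontrivial K := Submodule.nontrivial_iff_ne_bot.mpr hKne
      obtain ⟨i₀⟩ : Nonempty (Module.Free.ChooseBasisIndex ℤ ↥Γ) := bR.index_nonempty
      set ξ : E →ₗ[ℝ] ℝ := (bR.coord i₀) ∘ₗ Pl with hξdef
      have hξV : ∀ v ∈ V, ξ v = 0 := by
        intro v hv
        have hvK : v ∈ Kᗮ := hKW ▸ (hVW hv)
        have h0 : Pl v = 0 :=
          Submodule.orthogonalProjectionOnto_apply_of_mem_orthogonal hvK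
        rw [hξdef]
        simp [h0]
      have hξint : ∀ i, ∃ z : ℤ, ξ (c i) = (z : ℝ) := by
        intro i
        have hmem : Pl (c i) ∈ Γ := Submodule.subset_span ⟨i, rfl⟩
        refine ⟨b.repr ⟨Pl (c i), hmem⟩ i₀, ?_⟩
        rw [hξdef]
        simp only [LinearMap.coe_comp, Function.comp_apply, Module.Basis.coord_apply]
        have h2 := b.ofZLatticeBasis_repr_apply ℝ Γ ⟨Pl (c i), hmem⟩ i₀
        rw [← hbR] at h2
        exact_mod_cast h2
      have hξ0 : ξ = 0 := hfunc ξ hξV hξint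
      have hone : ξ ((bR i₀ : K) : E) = 1 := by
        rw [hξdef]
        simp only [LinearMap.coe_comp, Function.comp_apply]
        have hP : Pl ((bR i₀ : K) : E) = bR i₀ := by
          apply Subtype.ext
          simpa using hPlmem ((bR i₀ : K) : E) (bR i₀).2
        rw [hP, Module.Basis.coord_apply, Module.Basis.repr_self]
        simp
      rw [hξ0] at hone
      simpa using hone
  -- conclude : W = ⊤, hence G = ⊤
  have hWtop : W = ⊤ := Submodule.orthogonal_eq_bot_iff.mp hKbot
  refine AddSubgroup.ext fun x => ?_
  simp only [AddSubgroup.mem_top, iff_true]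
  have hxW : x ∈ W := hWtop ▸ Submodule.mem_top
  exact hWG x hxW
/-- Let `A ∈ M_d(ℤ) ∩ GL_d(ℝ)` have characteristic polynomial irreducible
over `ℚ`, and let `V ⊆ ℝ^d` be a nonzero linear subspace with `A V = V`. Then for every
`m ≥ 0` the set `V + A^m ℤ^d` is dense in `ℝ^d`; consequently, for all `x, y ∈ ℝ^d` there
are `x_m ∈ x + V` and `n_m ∈ A^m ℤ^d` with `x_m + n_m → y` as `m → ∞`. -/
theorem stmt8 (d : ℕ) (A : Matrix (Fin d) (Fin d) ℤ)
    (hdet : (A.map ((↑) : ℤ → ℝ)).det ≠ 0)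
    (hirr : Irreducible (Matrix.charpoly (A.map ((↑) : ℤ → ℚ))))
    (V : Submodule ℝ (EuclideanSpace ℝ (Fin d))) (hV : V ≠ ⊥)
    (hAV₁ : ∀ v ∈ V, mulVecE (A.map ((↑) : ℤ → ℝ)) v ∈ V)
    (hAV₂ : ∀ v ∈ V, ∃ w ∈ V, mulVecE (A.map ((↑) : ℤ → ℝ)) w = v) :
    (∀ m : ℕ, Dense {x : EuclideanSpace ℝ (Fin d) |
        ∃ v ∈ V, ∃ n : Fin d → ℤ, x = v + mulVecE ((A.map ((↑) : ℤ → ℝ)) ^ m) (intVec n)}) ∧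
    (∀ x y : EuclideanSpace ℝ (Fin d),
      ∃ xs ns : ℕ → EuclideanSpace ℝ (Fin d),
        (∀ m : ℕ, xs m - x ∈ V) ∧
        (∀ m : ℕ, ∃ n : Fin d → ℤ, ns m = mulVecE ((A.map ((↑) : ℤ → ℝ)) ^ m) (intVec n)) ∧
        Filter.Tendsto (fun m : ℕ => xs m + ns m) Filter.atTop (nhds y)) := by
  
  classical
  set B : Matrix (Fin d) (Fin d) ℝ := A.map ((↑) : ℤ → ℝ) with hB
  have hpow : ∀ (k : ℕ), ∀ v ∈ V, mulVecE (B ^ k) v ∈ V := by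
    intro k
    induction k with
    | zero =>
        intro v hv
        have h0 : mulVecE (B ^ 0) v = v := by
          show WithLp.toLp 2 ((B ^ 0) *ᵥ v.ofLp) = v
          rw [pow_zero, Matrix.one_mulVec, WithLp.toLp_ofLp]
        rw [h0]; exact hv
    | succ k ih =>
        intro v hv
        have h1 : mulVecE (B ^ (k+1)) v = mulVecE (B ^ k) (mulVecE B v) := by
          show WithLp.toLp 2 ((B ^ (k+1)) *ᵥ v.ofLp) = WithLp.toLp 2 ((B ^ k) *ᵥ (B *ᵥ v.ofLp))
          rw [Matrix.mulVec_mulVec, ← pow_succ]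
        rw [h1]; exact ih _ (hAV₁ v hv)
  have hdense : ∀ m : ℕ, Dense {x : EuclideanSpace ℝ (Fin d) |
      ∃ v ∈ V, ∃ n : Fin d → ℤ, x = v + mulVecE (B ^ m) (intVec n)} := by
    intro m
    set Bm : Matrix (Fin d) (Fin d) ℝ := B ^ m with hBm
    have hdetBm : Bm.det ≠ 0 := by rw [hBm, Matrix.det_pow]; exact pow_ne_zero m hdet
    set c : Fin d → EuclideanSpace ℝ (Fin d) :=
      fun i => mulVecE Bm (intVec (Pi.single i 1)) with hc
    have hcj : ∀ i j, c i j = Bm j i := by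
      intro i j
      show ∑ k, Bm j k * ((Pi.single i 1 : Fin d → ℤ) k : ℝ) = Bm j i
      rw [Finset.sum_eq_single i]
      · simp
      · intro b _ hb; simp [Pi.single_apply, hb]
      · simp
    have hdecR : ∀ x : EuclideanSpace ℝ (Fin d), mulVecE Bm x = ∑ i, x i • c i := by
      intro x
      apply WithLp.ofLp_injective 2
      funext j
      rw [WithLp.ofLp_sum, Finset.sum_apply]
      have h1 : ∀ i, (x i • c i) j = Bm j i * x i := by
        intro i
        show x i * c i j = Bm j i * x i
        rw [hcj, mul_comm]
      rw [Finset.sum_congr rfl fun i _ => h1 i]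
      rfl
    have hdecZ : ∀ n : Fin d → ℤ, mulVecE Bm (intVec n) = ∑ i, n i • c i := by
      intro n
      have h0 : (∑ i, n i • c i) = ∑ i, ((n i : ℝ)) • c i := by
        refine Finset.sum_congr rfl fun i _ => ?_
        rw [Int.cast_smul_eq_zsmul]
      rw [h0]
      apply WithLp.ofLp_injective 2
      funext j
      rw [WithLp.ofLp_sum, Finset.sum_apply]
      have h1 : ∀ i, ((n i : ℝ) • c i) j = Bm j i * (n i : ℝ) := by
        intro i
        show (n i : ℝ) * c i j = Bm j i * (n i : ℝ)
        rw [hcj, mul_comm]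
      rw [Finset.sum_congr rfl fun i _ => h1 i]
      rfl
    have hsurj : ∀ x : EuclideanSpace ℝ (Fin d), x = mulVecE Bm (WithLp.toLp 2 (Bm⁻¹ *ᵥ x)) := by
      intro x
      show x = WithLp.toLp 2 (Bm *ᵥ (Bm⁻¹ *ᵥ x))
      rw [Matrix.mulVec_mulVec, Matrix.mul_nonsing_inv _ (isUnit_iff_ne_zero.mpr hdetBm),
        Matrix.one_mulVec, WithLp.toLp_ofLp]
    have hspan : Submodule.span ℝ (Set.range c) = ⊤ := by
      rw [eq_top_iff]
      intro x _
      rw [hsurj x, hdecR]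
      exact Submodule.sum_mem _ fun i _ =>
        Submodule.smul_mem _ _ (Submodule.subset_span ⟨i, rfl⟩)
    have hfunc : ∀ ξ : EuclideanSpace ℝ (Fin d) →ₗ[ℝ] ℝ, (∀ v ∈ V, ξ v = 0) →
        (∀ i, ∃ z : ℤ, ξ (c i) = (z : ℝ)) → ξ = 0 := by
      intro ξ hξV hξint
      choose z hz using hξint
      have hwV : ∀ v ∈ V, (fun i => (z i : ℝ)) ⬝ᵥ (v : Fin d → ℝ) = 0 := by
        intro v hv
        have h1 : ξ (mulVecE Bm v) = 0 := hξV _ (hpow m v hv)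
        rw [hdecR v, map_sum] at h1
        have h3 : ∀ i, ξ ((v : EuclideanSpace ℝ (Fin d)) i • c i) = (z i : ℝ) * v i := by
          intro i
          rw [_root_.map_smul, hz i]
          show v i * (z i : ℝ) = _
          rw [mul_comm]
        rw [Finset.sum_congr rfl fun i _ => h3 i] at h1
        exact h1
      have hz0 : z = 0 := stepA A hirr V hV hAV₁ z hwV
      refine LinearMap.ext fun x => ?_
      rw [hsurj x, hdecR, map_sum]
      simp [_root_.map_smul, hz, hz0]
    have hseteq : {x : EuclideanSpace ℝ (Fin d) |
          ∃ v ∈ V, ∃ n : Fin d → ℤ, x = v + mulVecE Bm (intVec n)}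
        = {x : EuclideanSpace ℝ (Fin d) |
          ∃ v ∈ V, ∃ n : Fin d → ℤ, x = v + ∑ i, n i • c i} := by
      ext x
      constructor
      · rintro ⟨v, hv, n, rfl⟩; exact ⟨v, hv, n, by rw [hdecZ]⟩
      · rintro ⟨v, hv, n, rfl⟩; exact ⟨v, hv, n, by rw [hdecZ]⟩
    rw [hseteq]
    exact denseKey V c hspan hfunc
  refine ⟨hdense, fun x y => ?_⟩
  have hchoice : ∀ m : ℕ, ∃ v, v ∈ V ∧ ∃ n : Fin d → ℤ,
      dist (v + mulVecE (B ^ m) (intVec n)) (y - x) < 1/(m+1) := by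
    intro m
    have h1 : (y - x) ∈ closure {x_1 : EuclideanSpace ℝ (Fin d) |
        ∃ v ∈ V, ∃ n : Fin d → ℤ, x_1 = v + mulVecE (B ^ m) (intVec n)} :=
      (hdense m) _
    rw [Metric.mem_closure_iff] at h1
    obtain ⟨s, hs, hdist⟩ := h1 (1/(m+1)) (by positivity)
    obtain ⟨v, hv, n, rfl⟩ := hs
    exact ⟨v, hv, n, by rw [dist_comm]; exact hdist⟩
  choose v hvV n hdist using hchoice
  refine ⟨fun m => x + v m, fun m => mulVecE (B ^ m) (intVec (n m)), ?_, ?_, ?_⟩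
  · intro m; simpa [add_sub_cancel_left] using hvV m
  · intro m; exact ⟨n m, rfl⟩
  · rw [tendsto_iff_dist_tendsto_zero]
    refine squeeze_zero (g := fun m : ℕ => 1/(m+1)) (fun m => dist_nonneg) (fun m => ?_)
      tendsto_one_div_add_atTop_nhds_zero_nat
    have h2 : x + v m + mulVecE (B ^ m) (intVec (n m))
        = x + (v m + mulVecE (B ^ m) (intVec (n m))) := by rw [add_assoc]
    calc dist (x + v m + mulVecE (B ^ m) (intVec (n m))) y
        = dist (v m + mulVecE (B ^ m) (intVec (n m))) (y - x) := by
          rw [h2, show y = x + (y - x) from (add_sub_cancel x y).symm, dist_add_left,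
            add_sub_cancel_left]
      _ ≤ 1/(m+1) := le_of_lt (hdist m)
end

section
/- Let U ⊆ ℝ^d be a linear subspace such that U + ℤ^d is dense in ℝ^d, and let R be an equivalence relation on ℝ^d whose graph {(x, y) ∈ ℝ^d × ℝ^d : x R y} is a closed subset of ℝ^d × ℝ^d and which satisfies: (i) if x R y then (x + n) R (y + n) for every n ∈ ℤ^d; and (ii) x R (x + v) for every x ∈ ℝ^d and every v ∈ U. Then the equivalence class W = {x ∈ ℝ^d : 0 R x} of the origin is closed under addition: if x ∈ W and y ∈ W then x + y ∈ W. -/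
/-- Let `U ⊆ ℝ^d` be a linear subspace with `U + ℤ^d` dense in `ℝ^d`, and
let `R` be an equivalence relation on `ℝ^d` with closed graph such that (i) `x R y` implies
`(x+n) R (y+n)` for all `n ∈ ℤ^d`, and (ii) `x R (x+v)` for all `x` and all `v ∈ U`. Then
the equivalence class `W = {x : 0 R x}` of the origin is closed under addition. -/
theorem stmt12 (d : ℕ) (U : Submodule ℝ (EuclideanSpace ℝ (Fin d)))
    (hU : Dense {x : EuclideanSpace ℝ (Fin d) |
      ∃ u ∈ U, ∃ n : Fin d → ℤ, x = u + intVec n})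
    (R : EuclideanSpace ℝ (Fin d) → EuclideanSpace ℝ (Fin d) → Prop)
    (hEquiv : Equivalence R)
    (hClosed : IsClosed {p : EuclideanSpace ℝ (Fin d) × EuclideanSpace ℝ (Fin d) |
      R p.1 p.2})
    (hZd : ∀ x y : EuclideanSpace ℝ (Fin d), ∀ n : Fin d → ℤ,
      R x y → R (x + intVec n) (y + intVec n))
    (hUinv : ∀ x : EuclideanSpace ℝ (Fin d), ∀ v ∈ U, R x (x + v)) :
    ∀ x y : EuclideanSpace ℝ (Fin d), R 0 x → R 0 y → R 0 (x + y) := by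
  intro x y hx hy
  have key : ∀ z : EuclideanSpace ℝ (Fin d), R z (z + y) := by
    have hcl : IsClosed {z : EuclideanSpace ℝ (Fin d) | R z (z + y)} :=
      hClosed.preimage (continuous_id.prodMk (continuous_id.add continuous_const))
    have hsub : {x : EuclideanSpace ℝ (Fin d) |
        ∃ u ∈ U, ∃ n : Fin d → ℤ, x = u + intVec n} ⊆
        {z : EuclideanSpace ℝ (Fin d) | R z (z + y)} := by
      rintro z ⟨u, hu, n, rfl⟩
      have h1 : R (intVec n) (y + intVec n) := by
        have := hZd 0 y n hy
        simpa using this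
      have h2 : R (intVec n) (intVec n + u) := hUinv _ u hu
      have h3 : R (y + intVec n) (y + intVec n + u) := hUinv _ u hu
      have h4 : R (intVec n + u) (y + intVec n + u) :=
        hEquiv.trans (hEquiv.symm h2) (hEquiv.trans h1 h3)
      have e1 : (intVec n + u : EuclideanSpace ℝ (Fin d)) = u + intVec n := by abel
      have e2 : (y + intVec n + u : EuclideanSpace ℝ (Fin d)) = u + intVec n + y := by abel
      rw [e1, e2] at h4
      exact h4
    intro z
    have : closure {x : EuclideanSpace ℝ (Fin d) |
        ∃ u ∈ U, ∃ n : Fin d → ℤ, x = u + intVec n} ⊆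
        {z : EuclideanSpace ℝ (Fin d) | R z (z + y)} :=
      closure_minimal hsub hcl
    exact this (by rw [hU.closure_eq]; trivial)
  exact hEquiv.trans hx (key x)
end
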